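/- arXiv:1606.01691 — 5 statements merged into one kernel-verified Lean document; each statement's English description precedes it below -/
import Mathlib

section
/- Let G be a group, H a subgroup of finite index, and σ an irreducible complex representation of H. Then every irreducible subrepresentation τ of the induced representation Ind_H^G σ, when restricted back to H, contains some G-conjugate of σ as a subrepresentation. -/
set_option synthInstance.maxHeartbeats 1000000
set_option maxHeartbeats 1000000

noncomputable section

open Function

variable {G : Type*} [Group G]

/-- A submodule invariant under a representation. -/
def RepInvariant {V : Type*} [AddCommGroup V] [Module ℂ V]
    (ρ : Representation ℂ G V) (U : Submodule ℂ V) : Prop :=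
  ∀ g : G, ∀ v ∈ U, ρ g v ∈ U

/-- Irreducibility of a representation. -/
def RepIrreducible {V : Type*} [AddCommGroup V] [Module ℂ V]
    (ρ : Representation ℂ G V) : Prop :=
  Nontrivial V ∧ ∀ U : Submodule ℂ V, RepInvariant ρ U → U = ⊥ ∨ U = ⊤

/-- Equivariant linear maps. -/
def IsRepHom {V W : Type*} [AddCommGroup V] [Module ℂ V] [AddCommGroup W] [Module ℂ W]
    (ρ : Representation ℂ G V) (τ : Representation ℂ G W) (f : V →ₗ[ℂ] W) : Prop :=
  ∀ g v, f (ρ g v) = τ g (f v)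

/-- There is a nonzero equivariant map. -/
def HomNonzero {V W : Type*} [AddCommGroup V] [Module ℂ V] [AddCommGroup W] [Module ℂ W]
    (ρ : Representation ℂ G V) (τ : Representation ℂ G W) : Prop :=
  ∃ f : V →ₗ[ℂ] W, IsRepHom ρ τ f ∧ f ≠ 0

/-- Isomorphism of representations. -/
def RepIso {V W : Type*} [AddCommGroup V] [Module ℂ V] [AddCommGroup W] [Module ℂ W]
    (ρ : Representation ℂ G V) (τ : Representation ℂ G W) : Prop :=
  ∃ e : V ≃ₗ[ℂ] W, ∀ g v, e (ρ g v) = τ g (e v)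

/-- The representation on an invariant submodule. -/
def SubRep {V : Type*} [AddCommGroup V] [Module ℂ V]
    (ρ : Representation ℂ G V) (U : Submodule ℂ V) (hU : RepInvariant ρ U) :
    Representation ℂ G U where
  toFun g := (ρ g).restrict (hU g)
  map_one' := by
    refine LinearMap.ext fun v => Subtype.ext ?_
    simp [LinearMap.restrict_apply]
  map_mul' a b := by
    refine LinearMap.ext fun v => Subtype.ext ?_
    simp [LinearMap.restrict_apply]

/-- The space of the induced representation: equivariant functions on `G`. -/
def IndCarrier (H : Subgroup G) {V : Type*} [AddCommGroup V] [Module ℂ V]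
    (σ : Representation ℂ H V) : Submodule ℂ (G → V) where
  carrier := {f | ∀ (h : H) (g : G), f ((h : G) * g) = σ h (f g)}
  add_mem' := fun ha hb h g => by simp [ha h g, hb h g]
  zero_mem' := fun h g => by simp
  smul_mem' := fun c a ha h g => by simp [ha h g]

/-- The induced representation `Ind_H^G σ`. -/
def Ind (H : Subgroup G) {V : Type*} [AddCommGroup V] [Module ℂ V]
    (σ : Representation ℂ H V) : Representation ℂ G (IndCarrier H σ) where
  toFun g :=
    { toFun := fun f => ⟨fun x => (f : G → V) (x * g), fun h x => by
        simpa [mul_assoc] using f.2 h (x * g)⟩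
      map_add' := fun a b => rfl
      map_smul' := fun c a => rfl }
  map_one' := by
    refine LinearMap.ext fun f => Subtype.ext (funext fun x => ?_)
    simp
  map_mul' a b := by
    refine LinearMap.ext fun f => Subtype.ext (funext fun x => ?_)
    simp [mul_assoc]

/-- The conjugate subgroup `gHg⁻¹`. -/
def ConjSubgroup (g : G) (H : Subgroup G) : Subgroup G :=
  H.map (MulAut.conj g).toMonoidHom

lemma mem_conjSubgroup {g x : G} {H : Subgroup G} :
    x ∈ ConjSubgroup g H ↔ g⁻¹ * x * g ∈ H := by
  constructor
  · rintro ⟨h, hh, rfl⟩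
    simpa [mul_assoc] using hh
  · intro hx
    exact ⟨g⁻¹ * x * g, hx, by simp [mul_assoc]⟩

/-- The conjugate representation `^gσ`, viewed on any subgroup `L` with `g⁻¹Lg ⊆ H`. -/
def ConjRepOn {V : Type*} [AddCommGroup V] [Module ℂ V] {H : Subgroup G}
    (σ : Representation ℂ H V) (g : G) (L : Subgroup G)
    (hL : ∀ x ∈ L, g⁻¹ * x * g ∈ H) : Representation ℂ L V where
  toFun x := σ ⟨g⁻¹ * (x : G) * g, hL x x.2⟩
  map_one' := by
    show σ _ = 1
    have : (⟨g⁻¹ * ((1 : L) : G) * g, hL _ (Subgroup.one_mem L)⟩ : H) = 1 := by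
      apply Subtype.ext; simp
    rw [this, map_one]
  map_mul' x y := by
    show σ _ = σ _ * σ _
    rw [← map_mul]
    congr 1
    apply Subtype.ext
    simp [mul_assoc]

/-- The space of equivariant linear maps, as a submodule of the linear maps. -/
def RepHomSubmodule {V W : Type*} [AddCommGroup V] [Module ℂ V] [AddCommGroup W] [Module ℂ W]
    (ρ : Representation ℂ G V) (τ : Representation ℂ G W) : Submodule ℂ (V →ₗ[ℂ] W) where
  carrier := {f | IsRepHom ρ τ f}
  add_mem' := by
    intro a b ha hb g v
    simp [LinearMap.add_apply, ha g v, hb g v]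
  zero_mem' := by intro g v; simp
  smul_mem' := by
    intro c a ha g v
    simp [LinearMap.smul_apply, ha g v]

/-- Two representations share a common irreducible constituent. -/
def CommonConstituent {V W : Type*} [AddCommGroup V] [Module ℂ V] [AddCommGroup W] [Module ℂ W]
    (ρ₁ : Representation ℂ G V) (ρ₂ : Representation ℂ G W) : Prop :=
  ∃ (n : ℕ) (θ : Representation ℂ G (Fin n → ℂ)),
    RepIrreducible θ ∧ HomNonzero θ ρ₁ ∧ HomNonzero θ ρ₂
lemma indCarrier_fd (H : Subgroup G) [H.FiniteIndex]
    {V : Type*} [AddCommGroup V] [Module ℂ V] [FiniteDimensional ℂ V]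
    (σ : Representation ℂ H V) : FiniteDimensional ℂ (IndCarrier H σ) := by
  classical
  haveI : Finite (G ⧸ H) := H.finite_quotient_of_finiteIndex
  haveI : Fintype (G ⧸ H) := Fintype.ofFinite _
  let E : IndCarrier H σ →ₗ[ℂ] ((G ⧸ H) → V) :=
    { toFun := fun f q => (f : G → V) (Quotient.out q)⁻¹
      map_add' := fun a b => rfl
      map_smul' := fun c a => rfl }
  refine FiniteDimensional.of_injective E ?_
  refine (injective_iff_map_eq_zero E).mpr ?_
  intro f hf
  refine Subtype.ext (funext fun x => ?_)
  have hq : (QuotientGroup.mk (Quotient.out (QuotientGroup.mk x⁻¹ : G ⧸ H)) : G ⧸ H)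
      = QuotientGroup.mk x⁻¹ := QuotientGroup.out_eq' _
  have hmem : x * Quotient.out (QuotientGroup.mk x⁻¹ : G ⧸ H) ∈ H := by
    have := QuotientGroup.eq.mp hq.symm
    simpa using this
  set y := Quotient.out (QuotientGroup.mk x⁻¹ : G ⧸ H) with hy
  have hx : x = ((⟨x * y, hmem⟩ : H) : G) * y⁻¹ := by group
  have h0 : (f : G → V) y⁻¹ = 0 := congrFun hf (QuotientGroup.mk x⁻¹)
  calc (f : G → V) x = (f : G → V) (((⟨x * y, hmem⟩ : H) : G) * y⁻¹) := by rw [← hx]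
    _ = σ ⟨x * y, hmem⟩ ((f : G → V) y⁻¹) := f.2 _ _
    _ = 0 := by rw [h0, map_zero]

theorem aux_section (H : Subgroup G) [H.FiniteIndex]
    {V U : Type*} [AddCommGroup V] [Module ℂ V] [AddCommGroup U] [Module ℂ U]
    [FiniteDimensional ℂ U]
    (τ' : Representation ℂ G U) (hτ : RepIrreducible τ')
    (σ : Representation ℂ H V)
    (A : U →ₗ[ℂ] V) (hA : ∀ (h : H) (u : U), A (τ' (h : G) u) = σ h (A u))
    (hAsurj : Function.Surjective A) :
    ∃ (f : V →ₗ[ℂ] U) (c : ℂ), c ≠ 0 ∧ (∀ (h : H) (v : V), f (σ h v) = τ' (h : G) (f v)) ∧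
      ∀ v, A (f v) = c • v := by
  classical
  haveI hUnt : Nontrivial U := hτ.1
  set N : Subgroup G := H.normalCore with hN
  have hNle : N ≤ H := H.normalCore_le
  haveI : N.Normal := Subgroup.normalCore_normal H
  -- minimal nonzero N-invariant submodule
  have hP : ∃ n : ℕ, ∃ S : Submodule ℂ U,
      (∀ n ∈ N, ∀ u ∈ S, τ' n u ∈ S) ∧ S ≠ ⊥ ∧ Module.finrank ℂ S = n :=
    ⟨_, ⊤, fun g _ u _ => Submodule.mem_top, bot_ne_top.symm, rfl⟩
  obtain ⟨S, hSinv, hSne, hSrank⟩ := Nat.find_spec hP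
  have hSmin : ∀ S' : Submodule ℂ U, S' ≤ S → (∀ n ∈ N, ∀ u ∈ S', τ' n u ∈ S') →
      S' ≠ ⊥ → S' = S := by
    intro S' hle hinv' hne
    have h1 : Nat.find hP ≤ Module.finrank ℂ S' := Nat.find_min' hP ⟨S', hinv', hne, rfl⟩
    have h2 : Module.finrank ℂ S ≤ Module.finrank ℂ S' := by rw [hSrank]; exact h1
    exact Submodule.eq_of_le_of_finrank_le hle h2
  -- translates of S
  have hmapmap : ∀ (g : G) (P : Submodule ℂ U), (P.map (τ' g)).map (τ' g⁻¹) = P := by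
    intro g P
    rw [← Submodule.map_comp]
    have : (τ' g⁻¹).comp (τ' g) = LinearMap.id := by
      ext u
      simp [← Module.End.mul_apply, ← map_mul]
    rw [this, Submodule.map_id]
  have hmap_inv : ∀ (g : G), ∀ n ∈ N, ∀ u ∈ S.map (τ' g), τ' n u ∈ S.map (τ' g) := by
    rintro g n hn u ⟨s, hs, rfl⟩
    refine ⟨τ' (g⁻¹ * n * g) s, hSinv _ ?_ s hs, ?_⟩
    · have := Subgroup.Normal.conj_mem (inferInstance : N.Normal) n hn g⁻¹
      simpa [mul_assoc] using this
    · rw [← Module.End.mul_apply, ← map_mul, ← Module.End.mul_apply, ← map_mul]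
      congr 2
      group
  have hmap_ne : ∀ g : G, S.map (τ' g) ≠ ⊥ := by
    intro g hbot
    apply hSne
    have := congrArg (Submodule.map (τ' g⁻¹)) hbot
    rw [hmapmap] at this
    simpa using this
  have hmap_simple : ∀ (g : G) (S' : Submodule ℂ U), S' ≤ S.map (τ' g) →
      (∀ n ∈ N, ∀ u ∈ S', τ' n u ∈ S') → S' = ⊥ ∨ S' = S.map (τ' g) := by
    intro g S' hle hinv'
    have hle2 : S'.map (τ' g⁻¹) ≤ S := by
      have := Submodule.map_mono (f := τ' g⁻¹) hle
      rwa [hmapmap] at this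
    have hinv2 : ∀ n ∈ N, ∀ u ∈ S'.map (τ' g⁻¹), τ' n u ∈ S'.map (τ' g⁻¹) := by
      rintro n hn u ⟨s, hs, rfl⟩
      refine ⟨τ' (g * n * g⁻¹) s, hinv' _ ?_ s hs, ?_⟩
      · simpa using Subgroup.Normal.conj_mem (inferInstance : N.Normal) n hn g
      · rw [← Module.End.mul_apply, ← map_mul, ← Module.End.mul_apply, ← map_mul]
        congr 2
        group
    by_cases hbot : S'.map (τ' g⁻¹) = ⊥
    · left
      have := congrArg (Submodule.map (τ' g)) hbot
      rw [← Submodule.map_comp] at this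
      have hid : (τ' g).comp (τ' g⁻¹) = LinearMap.id := by
        ext u; simp [← Module.End.mul_apply, ← map_mul]
      rw [hid, Submodule.map_id] at this
      simpa using this
    · right
      have hS : S'.map (τ' g⁻¹) = S := hSmin _ hle2 hinv2 hbot
      have := congrArg (Submodule.map (τ' g)) hS
      rw [← Submodule.map_comp] at this
      have hid : (τ' g).comp (τ' g⁻¹) = LinearMap.id := by
        ext u; simp [← Module.End.mul_apply, ← map_mul]
      rw [hid, Submodule.map_id] at this
      exact this
  -- the translates span everything
  have hQtop : (⨆ g : G, S.map (τ' g)) = ⊤ := by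
    have hinv : RepInvariant τ' (⨆ g : G, S.map (τ' g)) := by
      intro g u hu
      refine Submodule.iSup_induction (motive := fun x => τ' g x ∈ ⨆ g' : G, S.map (τ' g'))
        _ hu ?_ ?_ ?_
      · rintro i x ⟨s, hs, rfl⟩
        have : τ' g (τ' i s) = τ' (g * i) s := by
          rw [← Module.End.mul_apply, ← map_mul]
        rw [this]
        exact Submodule.mem_iSup_of_mem (g * i) ⟨s, hs, rfl⟩
      · simp
      · intro x y hx hy
        rw [map_add]
        exact Submodule.add_mem _ hx hy
    rcases hτ.2 _ hinv with hbot | htop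
    · exfalso
      apply hmap_ne 1
      rw [← le_bot_iff, ← hbot]
      exact le_iSup (fun g : G => S.map (τ' g)) 1
    · exact htop
  -- kernel of A
  set K : Submodule ℂ U := LinearMap.ker A with hK
  have hKinv : ∀ n ∈ N, ∀ u ∈ K, τ' n u ∈ K := by
    intro n hn u hu
    have : A (τ' (((⟨n, hNle hn⟩ : H) : G)) u) = σ ⟨n, hNle hn⟩ (A u) := hA ⟨n, hNle hn⟩ u
    have hu0 : A u = 0 := hu
    rw [LinearMap.mem_ker]
    show A (τ' n u) = 0
    rw [show (n : G) = ((⟨n, hNle hn⟩ : H) : G) from rfl, this, hu0, map_zero]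
  -- complement of K
  have main : ∀ (m : ℕ) (W : Submodule ℂ U),
      (∀ n ∈ N, ∀ u ∈ W, τ' n u ∈ W) → W ⊓ K = ⊥ →
      Module.finrank ℂ U ≤ m + Module.finrank ℂ W →
      ∃ Wf : Submodule ℂ U, (∀ n ∈ N, ∀ u ∈ Wf, τ' n u ∈ Wf) ∧ Wf ⊓ K = ⊥ ∧ Wf ⊔ K = ⊤ := by
    intro m
    induction m with
    | zero =>
      intro W hWinv hWdisj hrank
      have hWtop : W = ⊤ := by
        refine Submodule.eq_of_le_of_finrank_le le_top ?_
        rw [finrank_top]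
        simpa using hrank
      refine ⟨⊤, fun n _ u _ => Submodule.mem_top, ?_, by simp⟩
      rw [← hWtop]
      exact hWdisj
    | succ m ih =>
      intro W hWinv hWdisj hrank
      by_cases hc : W ⊔ K = ⊤
      · exact ⟨W, hWinv, hWdisj, hc⟩
      obtain ⟨g, hg⟩ : ∃ g : G, ¬ S.map (τ' g) ≤ W ⊔ K := by
        by_contra hall
        push_neg at hall
        exact hc (le_antisymm le_top (hQtop ▸ iSup_le hall))
      have hKWinv : ∀ n ∈ N, ∀ u ∈ W ⊔ K, τ' n u ∈ W ⊔ K := by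
        intro n hn u hu
        obtain ⟨w, hw, k, hk, rfl⟩ := Submodule.mem_sup.mp hu
        rw [map_add]
        exact Submodule.add_mem _ (Submodule.mem_sup_left (hWinv n hn w hw))
          (Submodule.mem_sup_right (hKinv n hn k hk))
      have hsmall : S.map (τ' g) ⊓ (W ⊔ K) = ⊥ := by
        rcases hmap_simple g _ inf_le_left
            (fun n hn u hu => Submodule.mem_inf.mpr
              ⟨hmap_inv g n hn u (Submodule.mem_inf.mp hu).1,
               hKWinv n hn u (Submodule.mem_inf.mp hu).2⟩) with h | h
        · exact h
        · exact absurd (h ▸ inf_le_right) hg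
      have hWS : (W ⊔ S.map (τ' g)) ⊓ K = ⊥ := by
        rw [Submodule.eq_bot_iff]
        rintro x hx
        obtain ⟨hx1, hx2⟩ := Submodule.mem_inf.mp hx
        obtain ⟨w, hw, s, hs, rfl⟩ := Submodule.mem_sup.mp hx1
        have hsmem : s ∈ S.map (τ' g) ⊓ (W ⊔ K) := by
          refine Submodule.mem_inf.mpr ⟨hs, Submodule.mem_sup.mpr ⟨-w, Submodule.neg_mem _ hw,
            w + s, hx2, by abel⟩⟩
        rw [hsmall, Submodule.mem_bot] at hsmem
        have hwK : w ∈ W ⊓ K := by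
          refine Submodule.mem_inf.mpr ⟨hw, ?_⟩
          simpa [hsmem] using hx2
        rw [hWdisj, Submodule.mem_bot] at hwK
        rw [hsmem, hwK, add_zero]
      have hne : W ≠ W ⊔ S.map (τ' g) := by
        intro heq
        exact hg ((le_sup_right.trans heq.symm.le).trans le_sup_left)
      have hlt : Module.finrank ℂ W < Module.finrank ℂ ↥(W ⊔ S.map (τ' g)) :=
        Submodule.finrank_lt_finrank_of_lt (lt_of_le_of_ne le_sup_left hne)
      refine ih (W ⊔ S.map (τ' g)) ?_ hWS (by omega)
      intro n hn u hu
      obtain ⟨w, hw, s, hs, rfl⟩ := Submodule.mem_sup.mp hu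
      rw [map_add]
      exact Submodule.add_mem _ (Submodule.mem_sup_left (hWinv n hn w hw))
        (Submodule.mem_sup_right (hmap_inv g n hn s hs))
  obtain ⟨W, hWinv, hWdisj, hWsup⟩ := main (Module.finrank ℂ U) ⊥
    (fun n _ u hu => by simp_all) (bot_inf_eq K) (by simp)
  -- A is bijective from W to V
  have hWinjA : ∀ w : U, w ∈ W → A w = 0 → w = 0 := by
    intro w hw h0
    have : w ∈ W ⊓ K := Submodule.mem_inf.mpr ⟨hw, h0⟩
    rwa [hWdisj, Submodule.mem_bot] at this
  have hWsurjA : ∀ v : V, ∃ w ∈ W, A w = v := by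
    intro v
    obtain ⟨u, rfl⟩ := hAsurj v
    have hu : u ∈ W ⊔ K := hWsup ▸ Submodule.mem_top
    obtain ⟨w, hw, k, hk, rfl⟩ := Submodule.mem_sup.mp hu
    refine ⟨w, hw, ?_⟩
    rw [map_add, (LinearMap.mem_ker.mp hk), add_zero]
  let AW : W →ₗ[ℂ] V := A.comp W.subtype
  have hbij : Function.Bijective AW := by
    constructor
    · intro a b hab
      have : ((a : U) - b) ∈ W := Submodule.sub_mem _ a.2 b.2
      have h0 : A ((a : U) - b) = 0 := by
        rw [map_sub, sub_eq_zero]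
        exact hab
      have := hWinjA _ this h0
      exact Subtype.ext (sub_eq_zero.mp this)
    · intro v
      obtain ⟨w, hw, hv⟩ := hWsurjA v
      exact ⟨⟨w, hw⟩, hv⟩
  let e : W ≃ₗ[ℂ] V := LinearEquiv.ofBijective AW hbij
  let s₀ : V →ₗ[ℂ] U := W.subtype.comp e.symm.toLinearMap
  have hs₀mem : ∀ v, s₀ v ∈ W := fun v => (e.symm v).2
  have hAs₀ : ∀ v, A (s₀ v) = v := by
    intro v
    show A ((e.symm v : W) : U) = v
    have := e.apply_symm_apply v
    exact this
  have hs₀equiv : ∀ (n : G) (hn : n ∈ N) (v : V), s₀ (σ ⟨n, hNle hn⟩ v) = τ' n (s₀ v) := by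
    intro n hn v
    have h1 : τ' n (s₀ v) ∈ W := hWinv n hn _ (hs₀mem v)
    have h2 : s₀ (σ ⟨n, hNle hn⟩ v) ∈ W := hs₀mem _
    have h3 : A (s₀ (σ ⟨n, hNle hn⟩ v)) = A (τ' n (s₀ v)) := by
      rw [hAs₀]
      conv_lhs => rw [← hAs₀ v]
      exact (hA ⟨n, hNle hn⟩ (s₀ v)).symm
    have h4 := hWinjA _ (Submodule.sub_mem _ h2 h1) (by rw [map_sub, h3, sub_self])
    exact sub_eq_zero.mp h4
  -- averaging over H / (N ∩ H)
  set NH : Subgroup H := N.subgroupOf H with hNH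
  haveI : N.FiniteIndex := Subgroup.finiteIndex_normalCore H
  haveI hfin : Finite (H ⧸ NH) := by
    refine Finite.of_injective (fun q : H ⧸ NH => (QuotientGroup.mk ((q.out : H) : G) : G ⧸ N)) ?_
    intro q₁ q₂ hq
    have hmem : (((q₁.out : H) : G))⁻¹ * ((q₂.out : H) : G) ∈ N := QuotientGroup.eq.mp hq
    have hmem2 : (q₁.out)⁻¹ * q₂.out ∈ NH :=
      Subgroup.mem_subgroupOf.mpr (by simpa using hmem)
    calc q₁ = QuotientGroup.mk q₁.out := (QuotientGroup.out_eq' q₁).symm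
      _ = QuotientGroup.mk q₂.out := QuotientGroup.eq.mpr hmem2
      _ = q₂ := QuotientGroup.out_eq' q₂
  haveI : Fintype (H ⧸ NH) := Fintype.ofFinite _
  let c : H → (V →ₗ[ℂ] U) := fun h => (τ' (h : G)) ∘ₗ s₀ ∘ₗ (σ h⁻¹)
  have hAc : ∀ (h : H) (v : V), A (c h v) = v := by
    intro h v
    show A (τ' (h : G) (s₀ (σ h⁻¹ v))) = v
    rw [hA h, hAs₀, ← Module.End.mul_apply, ← map_mul, mul_inv_cancel, map_one,
      Module.End.one_apply]
  have hc_coset : ∀ x y : H, x⁻¹ * y ∈ NH → c x = c y := by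
    intro x y hxy
    have hnN : ((x⁻¹ * y : H) : G) ∈ N := Subgroup.mem_subgroupOf.mp hxy
    have hy : y = x * (x⁻¹ * y) := by group
    ext v
    show τ' (x : G) (s₀ (σ x⁻¹ v)) = τ' (y : G) (s₀ (σ y⁻¹ v))
    rw [hy]
    set n : H := x⁻¹ * y with hn
    have hcoe : ((x * n : H) : G) = (x : G) * (n : G) := rfl
    rw [hcoe, map_mul, Module.End.mul_apply]
    congr 1
    have hstep : τ' (n : G) (s₀ (σ (x * n)⁻¹ v)) = s₀ (σ n (σ (x * n)⁻¹ v)) := by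
      have := hs₀equiv (n : G) hnN (σ (x * n)⁻¹ v)
      have hsub : (⟨(n : G), hNle hnN⟩ : H) = n := Subtype.ext rfl
      rw [hsub] at this
      exact this.symm
    rw [hstep]
    congr 1
    rw [← Module.End.mul_apply, ← map_mul]
    congr 1
    group
  let f : V →ₗ[ℂ] U := ∑ q : H ⧸ NH, c q.out
  refine ⟨f, (Fintype.card (H ⧸ NH) : ℂ), ?_, ?_, ?_⟩
  · exact_mod_cast Fintype.card_ne_zero
  · intro h v
    show (∑ q : H ⧸ NH, c q.out) (σ h v) = τ' (h : G) ((∑ q : H ⧸ NH, c q.out) v)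
    rw [LinearMap.sum_apply, LinearMap.sum_apply, map_sum]
    have key : ∀ q : H ⧸ NH, c q.out (σ h v) = τ' (h : G) (c (h⁻¹ • q).out v) := by
      intro q
      have h2 : c (h⁻¹ • q).out = c (h⁻¹ * q.out) := by
        refine (hc_coset _ _ ?_).symm
        refine QuotientGroup.eq.mp ?_
        calc (QuotientGroup.mk (h⁻¹ * q.out) : H ⧸ NH)
            = h⁻¹ • (QuotientGroup.mk q.out) := by
              rw [MulAction.Quotient.smul_mk]
              rfl
          _ = h⁻¹ • q := by rw [QuotientGroup.out_eq']
          _ = QuotientGroup.mk (h⁻¹ • q).out := (QuotientGroup.out_eq' _).symm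
      rw [h2]
      show τ' ((q.out : H) : G) (s₀ (σ q.out⁻¹ (σ h v)))
        = τ' (h : G) (τ' ((h⁻¹ * q.out : H) : G) (s₀ (σ (h⁻¹ * q.out)⁻¹ v)))
      rw [← Module.End.mul_apply (τ' (h : G)), ← map_mul]
      have e1 : (h : G) * ((h⁻¹ * q.out : H) : G) = ((q.out : H) : G) := by
        have : ((h⁻¹ * q.out : H) : G) = (h : G)⁻¹ * ((q.out : H) : G) := rfl
        rw [this]
        group
      rw [e1]
      congr 2
      rw [← Module.End.mul_apply, ← map_mul]
      congr 1
      group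
    rw [Finset.sum_congr rfl (fun q _ => key q)]
    exact Equiv.sum_comp (MulAction.toPerm (h⁻¹ : H))
      (fun q : H ⧸ NH => τ' (h : G) (c q.out v))
  · intro v
    show A ((∑ q : H ⧸ NH, c q.out) v) = _
    rw [LinearMap.sum_apply, map_sum]
    simp only [hAc]
    rw [Finset.sum_const, Finset.card_univ, Nat.cast_smul_eq_nsmul]

/-- every irreducible subrepresentation τ of `Ind_H^G σ` (σ irreducible, H of
finite index), restricted back to `H`, contains some `G`-conjugate of `σ`. -/
theorem stmt0 (H : Subgroup G) [H.FiniteIndex]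
    {V : Type*} [AddCommGroup V] [Module ℂ V] [FiniteDimensional ℂ V]
    (σ : Representation ℂ H V) (hσ : RepIrreducible σ)
    (U : Submodule ℂ (IndCarrier H σ)) (hU : RepInvariant (Ind H σ) U)
    (hτ : RepIrreducible (V := U) (SubRep (Ind H σ) U hU)) :
    ∃ g : G, ∃ f : V →ₗ[ℂ] U, f ≠ 0 ∧ Function.Injective f ∧
      ∀ (h : H) (v : V),
        f (σ h v) = SubRep (Ind H σ) U hU (g * (h : G) * g⁻¹) (f v) := by
    classical
  haveI : FiniteDimensional ℂ (IndCarrier H σ) := indCarrier_fd H σ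
  haveI : Nontrivial U := hτ.1
  set τ' : Representation ℂ G U := SubRep (Ind H σ) U hU with hτ'
  let A : U →ₗ[ℂ] V :=
    { toFun := fun u => ((u : IndCarrier H σ) : G → V) 1
      map_add' := fun a b => rfl
      map_smul' := fun c a => rfl }
  have hA : ∀ (h : H) (u : U), A (τ' (h : G) u) = σ h (A u) := by
    intro h u
    show ((u : IndCarrier H σ) : G → V) (1 * (h : G))
      = σ h (((u : IndCarrier H σ) : G → V) 1)
    rw [one_mul]
    have := (u : IndCarrier H σ).2 h 1
    rwa [mul_one] at this
  have hne : ∃ u : U, A u ≠ 0 := by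
    obtain ⟨u, hu⟩ := exists_ne (0 : U)
    have hfun : ((u : IndCarrier H σ) : G → V) ≠ 0 := by
      intro h0
      exact hu (Subtype.ext (Subtype.ext h0))
    obtain ⟨x, hx⟩ := Function.ne_iff.mp hfun
    refine ⟨τ' x u, ?_⟩
    show ((u : IndCarrier H σ) : G → V) (1 * x) ≠ 0
    rw [one_mul]
    exact hx
  have hAsurj : Function.Surjective A := by
    have hinv : RepInvariant σ (LinearMap.range A) := by
      rintro h v ⟨u, rfl⟩
      exact ⟨τ' (h : G) u, hA h u⟩
    rcases hσ.2 _ hinv with hbot | htop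
    · exfalso
      obtain ⟨u, hu⟩ := hne
      have : A u ∈ (⊥ : Submodule ℂ V) := hbot ▸ LinearMap.mem_range_self A u
      exact hu (Submodule.mem_bot ℂ |>.mp this)
    · intro v
      have : v ∈ LinearMap.range A := by rw [htop]; trivial
      exact this
  obtain ⟨f, cst, hc0, hequiv, hAf⟩ := aux_section (V := V) (U := U) H τ' hτ σ A hA hAsurj
  haveI : Nontrivial V := hσ.1
  obtain ⟨v₀, hv₀⟩ := exists_ne (0 : V) (α := V)
  have hker : LinearMap.ker f = ⊥ := by
    have hinv : RepInvariant σ (LinearMap.ker f) := by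
      intro h v hv
      rw [LinearMap.mem_ker, hequiv h v, LinearMap.mem_ker.mp hv, map_zero]
    rcases hσ.2 _ hinv with h | h
    · exact h
    · exfalso
      have hv0 : f v₀ = 0 := LinearMap.mem_ker.mp (h ▸ Submodule.mem_top)
      have h2 := hAf v₀
      rw [hv0, map_zero] at h2
      exact hv₀ ((smul_eq_zero.mp h2.symm).resolve_left hc0)
  refine ⟨1, f, ?_, LinearMap.ker_eq_bot.mp hker, ?_⟩
  · intro h0
    have h2 := hAf v₀
    rw [h0] at h2
    simp only [LinearMap.zero_apply, map_zero] at h2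
    exact hv₀ ((smul_eq_zero.mp h2.symm).resolve_left hc0)
  · intro h v
    have hg : (1 : G) * (h : G) * (1 : G)⁻¹ = (h : G) := by group
    rw [hg]
    exact hequiv h v
end
end

section
/- Let G be a finite group, H and K subgroups, σ a complex representation of H. Then the restriction to K of the induced representation Ind_H^G σ decomposes as a direct sum over double cosets KgH of Ind_{K ∩ gHg⁻¹}^K of the restriction of the conjugate representation ^gσ (Mackey decomposition). -/
set_option synthInstance.maxHeartbeats 1000000
set_option maxHeartbeats 1000000

noncomputable section

open Function

variable {G : Type*} [Group G]

/-- The Mackey summand datum: the conjugate representation `^sσ` of the subgroup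
`K ∩ sHs⁻¹`, viewed as a subgroup of `K`. -/
def MackeyPiece (H K : Subgroup G) {V : Type*} [AddCommGroup V] [Module ℂ V]
    (σ : Representation ℂ H V) (s : G) :
    Representation ℂ ((ConjSubgroup s H ⊓ K).subgroupOf K) V :=
  (ConjRepOn σ s (ConjSubgroup s H ⊓ K)
      (fun x hx => mem_conjSubgroup.mp (Subgroup.mem_inf.mp hx).1)).comp
    (Subgroup.subgroupOfEquivOfLe inf_le_right).toMonoidHom

section MackeyAux

variable {V : Type*} [AddCommGroup V] [Module ℂ V]
variable (H K : Subgroup G) (σ : Representation ℂ H V)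

lemma mackeyPiece_apply (s : G) (l : ((ConjSubgroup s H ⊓ K).subgroupOf K))
    (hl : s⁻¹ * ((l : K) : G) * s ∈ H) (v : V) :
    MackeyPiece H K σ s l v = σ ⟨s⁻¹ * ((l : K) : G) * s, hl⟩ v := rfl

/-- Forward map, one component: restrict an equivariant function on `G` to the coset `s⁻¹K`. -/
def mackeyRes (s : G) (f : IndCarrier H σ) :
    IndCarrier ((ConjSubgroup s H ⊓ K).subgroupOf K) (MackeyPiece H K σ s) :=
  ⟨fun k => (f : G → V) (s⁻¹ * (k : G)), by
    intro l k
    have hl : s⁻¹ * ((l : K) : G) * s ∈ H :=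
      mem_conjSubgroup.mp (Subgroup.mem_inf.mp (Subgroup.mem_subgroupOf.mp l.2)).1
    have hf := f.2 ⟨_, hl⟩ (s⁻¹ * (k : G))
    have hx : s⁻¹ * ((((l : K) * k : K)) : G) =
        (s⁻¹ * ((l : K) : G) * s) * (s⁻¹ * (k : G)) := by
      push_cast; group
    show (f : G → V) (s⁻¹ * ((((l : K) * k : K)) : G)) = _
    rw [hx]
    exact hf⟩

variable (S : Finset G)

/-- The forward linear map of the Mackey decomposition. -/
def mackeyFwd : IndCarrier H σ →ₗ[ℂ]
    ((s : S) → IndCarrier ((ConjSubgroup (s : G) H ⊓ K).subgroupOf K)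
      (MackeyPiece H K σ (s : G))) where
  toFun f s := mackeyRes H K σ (s : G) f
  map_add' f g := by funext s; exact Subtype.ext (funext fun k => rfl)
  map_smul' c f := by funext s; exact Subtype.ext (funext fun k => rfl)

variable (hS : ∀ x : G, ∃! s, s ∈ S ∧ ∃ k ∈ K, ∃ h ∈ H, x = k * s * h)

include hS

lemma mackey_decompT (x : G) : ∃ t : G × G × G,
    t.1 ∈ S ∧ t.2.1 ∈ K ∧ t.2.2 ∈ H ∧ x⁻¹ = t.2.1 * t.1 * t.2.2 := by
  obtain ⟨s, ⟨hs, k, hk, h, hh, hx⟩, -⟩ := hS x⁻¹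
  exact ⟨(s, k, h), hs, hk, hh, hx⟩

/-- A chosen double-coset decomposition `x⁻¹ = k * s * h`. -/
noncomputable def mackeyDec (x : G) : G × G × G := (mackey_decompT H K S hS x).choose

lemma mackeyDec_spec (x : G) :
    (mackeyDec H K S hS x).1 ∈ S ∧ (mackeyDec H K S hS x).2.1 ∈ K ∧
      (mackeyDec H K S hS x).2.2 ∈ H ∧
      x⁻¹ = (mackeyDec H K S hS x).2.1 * (mackeyDec H K S hS x).1 *
        (mackeyDec H K S hS x).2.2 :=
  (mackey_decompT H K S hS x).choose_spec

lemma mackeyDec_s_unique (x : G) {s' k' h' : G} (hs' : s' ∈ S) (hk' : k' ∈ K)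
    (hh' : h' ∈ H) (hx : x⁻¹ = k' * s' * h') : s' = (mackeyDec H K S hS x).1 := by
  obtain ⟨hs, hk, hh, he⟩ := mackeyDec_spec H K S hS x
  exact (hS x⁻¹).unique ⟨hs', k', hk', h', hh', hx⟩ ⟨hs, _, hk, _, hh, he⟩

/-- The underlying function of the inverse map. -/
noncomputable def mackeyInvFun
    (F : (s : S) → IndCarrier ((ConjSubgroup (s : G) H ⊓ K).subgroupOf K)
      (MackeyPiece H K σ (s : G))) (x : G) : V :=
  σ ⟨(mackeyDec H K S hS x).2.2⁻¹, H.inv_mem (mackeyDec_spec H K S hS x).2.2.1⟩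
    ((F ⟨(mackeyDec H K S hS x).1, (mackeyDec_spec H K S hS x).1⟩ : K → V)
      (⟨(mackeyDec H K S hS x).2.1, (mackeyDec_spec H K S hS x).2.1⟩ : K)⁻¹)

lemma mackeyInvFun_eq
    (F : (s : S) → IndCarrier ((ConjSubgroup (s : G) H ⊓ K).subgroupOf K)
      (MackeyPiece H K σ (s : G))) (x : G) {s' k' h' : G} (hs' : s' ∈ S) (hk' : k' ∈ K)
    (hh' : h' ∈ H) (hx : x⁻¹ = k' * s' * h') :
    mackeyInvFun H K σ S hS F x
      = σ ⟨h'⁻¹, H.inv_mem hh'⟩ ((F ⟨s', hs'⟩ : K → V) (⟨k', hk'⟩ : K)⁻¹) := by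
  have hss : s' = (mackeyDec H K S hS x).1 :=
    mackeyDec_s_unique H K S hS x hs' hk' hh' hx
  subst hss
  obtain ⟨hs, hk, hh, he⟩ := mackeyDec_spec H K S hS x
  set s := (mackeyDec H K S hS x).1
  set k := (mackeyDec H K S hS x).2.1
  set h := (mackeyDec H K S hS x).2.2
  have hstart : mackeyInvFun H K σ S hS F x
      = σ ⟨h⁻¹, H.inv_mem hh⟩ ((F ⟨s, hs⟩ : K → V) (⟨k, hk⟩ : K)⁻¹) := rfl
  rw [hstart]
  have heq : k' * s * h' = k * s * h := hx.symm.trans he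
  have hlk : s * (h' * h⁻¹) * s⁻¹ = k'⁻¹ * k := by
    have h2 : k = k' * s * h' * h⁻¹ * s⁻¹ := by rw [heq]; group
    rw [h2]; group
  have hlK : s * (h' * h⁻¹) * s⁻¹ ∈ K := hlk ▸ mul_mem (K.inv_mem hk') hk
  have hlC : s * (h' * h⁻¹) * s⁻¹ ∈ ConjSubgroup s H := by
    rw [mem_conjSubgroup]
    have h3 : s⁻¹ * (s * (h' * h⁻¹) * s⁻¹) * s = h' * h⁻¹ := by group
    rw [h3]
    exact mul_mem hh' (H.inv_mem hh)
  have hlL : (⟨s * (h' * h⁻¹) * s⁻¹, hlK⟩ : K) ∈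
      (ConjSubgroup s H ⊓ K).subgroupOf K :=
    Subgroup.mem_subgroupOf.mpr (Subgroup.mem_inf.mpr ⟨hlC, hlK⟩)
  have hF := (F ⟨s, hs⟩).2 ⟨⟨s * (h' * h⁻¹) * s⁻¹, hlK⟩, hlL⟩ (⟨k, hk⟩ : K)⁻¹
  have harg : (⟨s * (h' * h⁻¹) * s⁻¹, hlK⟩ : K) * (⟨k, hk⟩ : K)⁻¹
      = (⟨k', hk'⟩ : K)⁻¹ := by
    apply Subtype.ext
    show s * (h' * h⁻¹) * s⁻¹ * k⁻¹ = k'⁻¹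
    rw [hlk]; group
  rw [harg] at hF
  have hσH : s⁻¹ * (s * (h' * h⁻¹) * s⁻¹) * s ∈ H := by
    have h3 : s⁻¹ * (s * (h' * h⁻¹) * s⁻¹) * s = h' * h⁻¹ := by group
    rw [h3]; exact mul_mem hh' (H.inv_mem hh)
  rw [mackeyPiece_apply H K σ s _ hσH] at hF
  have hindex : (F ⟨s, hs'⟩) = (F ⟨s, hs⟩) := rfl
  rw [hindex, hF]
  rw [← Module.End.mul_apply, ← map_mul]
  congr 2
  apply Subtype.ext
  show h⁻¹ = h'⁻¹ * (s⁻¹ * (s * (h' * h⁻¹) * s⁻¹) * s)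
  group

/-- The inverse linear map of the Mackey decomposition. -/
noncomputable def mackeyInv :
    ((s : S) → IndCarrier ((ConjSubgroup (s : G) H ⊓ K).subgroupOf K)
      (MackeyPiece H K σ (s : G))) →ₗ[ℂ] IndCarrier H σ where
  toFun F := ⟨mackeyInvFun H K σ S hS F, by
    intro h₀ x
    obtain ⟨hs, hk, hh, he⟩ := mackeyDec_spec H K S hS x
    have he2 : ((h₀ : G) * x)⁻¹ = (mackeyDec H K S hS x).2.1 * (mackeyDec H K S hS x).1 *
        ((mackeyDec H K S hS x).2.2 * (h₀ : G)⁻¹) := by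
      rw [mul_inv_rev, he]; group
    rw [mackeyInvFun_eq H K σ S hS F ((h₀ : G) * x) hs hk
        (mul_mem hh (H.inv_mem h₀.2)) he2,
      mackeyInvFun_eq H K σ S hS F x hs hk hh he]
    rw [← Module.End.mul_apply, ← map_mul]
    congr 1
    congr 1
    apply Subtype.ext
    show ((mackeyDec H K S hS x).2.2 * (h₀ : G)⁻¹)⁻¹ =
      (h₀ : G) * (mackeyDec H K S hS x).2.2⁻¹
    group⟩
  map_add' F F' := by
    apply Subtype.ext
    funext x
    show mackeyInvFun H K σ S hS (F + F') x
      = mackeyInvFun H K σ S hS F x + mackeyInvFun H K σ S hS F' x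
    simp only [mackeyInvFun, Pi.add_apply, Submodule.coe_add, map_add]
  map_smul' c F := by
    apply Subtype.ext
    funext x
    show mackeyInvFun H K σ S hS (c • F) x = c • mackeyInvFun H K σ S hS F x
    simp only [mackeyInvFun, Pi.smul_apply, Submodule.coe_smul, map_smul]

lemma mackey_left_inv :
    (mackeyInv H K σ S hS).comp (mackeyFwd H K σ S) = LinearMap.id := by
  apply LinearMap.ext
  intro f
  apply Subtype.ext
  funext x
  obtain ⟨hs, hk, hh, he⟩ := mackeyDec_spec H K S hS x
  show mackeyInvFun H K σ S hS (fun s => mackeyRes H K σ (s : G) f) x = (f : G → V) x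
  rw [mackeyInvFun_eq H K σ S hS _ x hs hk hh he]
  show σ _ ((f : G → V) ((mackeyDec H K S hS x).1⁻¹ *
      ((⟨(mackeyDec H K S hS x).2.1, hk⟩ : K)⁻¹ : K))) = _
  have hx2 : x = ((mackeyDec H K S hS x).2.2⁻¹ : G) *
      ((mackeyDec H K S hS x).1⁻¹ * (mackeyDec H K S hS x).2.1⁻¹) := by
    conv_lhs => rw [← inv_inv x, he]
    group
  have hf := f.2 ⟨(mackeyDec H K S hS x).2.2⁻¹, H.inv_mem hh⟩
    ((mackeyDec H K S hS x).1⁻¹ * (mackeyDec H K S hS x).2.1⁻¹)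
  conv_rhs => rw [hx2]
  exact hf.symm

lemma mackey_right_inv :
    (mackeyFwd H K σ S).comp (mackeyInv H K σ S hS) = LinearMap.id := by
  apply LinearMap.ext
  intro F
  funext s
  apply Subtype.ext
  funext k
  show mackeyInvFun H K σ S hS F ((s : G)⁻¹ * (k : G)) = (F s : K → V) k
  have hx : ((s : G)⁻¹ * (k : G))⁻¹ = (k : G)⁻¹ * (s : G) * 1 := by group
  rw [mackeyInvFun_eq H K σ S hS F _ s.2 (K.inv_mem k.2) (one_mem H) hx]
  have h1 : (⟨(1 : G)⁻¹, H.inv_mem (one_mem H)⟩ : H) = 1 := Subtype.ext (by simp)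
  have h2 : ((⟨(k : G)⁻¹, K.inv_mem k.2⟩ : K)⁻¹ : K) = k := by
    apply Subtype.ext; simp
  have h3 : (⟨(s : G), s.2⟩ : S) = s := rfl
  rw [h1, h2, h3, map_one]
  rfl

end MackeyAux

/-- Mackey decomposition.  If `S` is a set of representatives for the double
cosets `K\\G/H` of a finite group `G`, then `Res_K Ind_H^G σ` is isomorphic, as a
representation of `K`, to the direct sum over `s ∈ S` of `Ind_{K ∩ sHs⁻¹}^K Res (^sσ)`. -/
theorem stmt2 [Fintype G] (H K : Subgroup G)
    {V : Type*} [AddCommGroup V] [Module ℂ V] [FiniteDimensional ℂ V]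
    (σ : Representation ℂ H V) (S : Finset G)
    (hS : ∀ x : G, ∃! s, s ∈ S ∧ ∃ k ∈ K, ∃ h ∈ H, x = k * s * h) :
    ∃ e : IndCarrier H σ ≃ₗ[ℂ]
        ((s : S) → IndCarrier ((ConjSubgroup (s : G) H ⊓ K).subgroupOf K)
          (MackeyPiece H K σ (s : G))),
      ∀ (k : K) (v : IndCarrier H σ) (s : S),
        e ((Ind H σ) (k : G) v) s =
          (Ind ((ConjSubgroup (s : G) H ⊓ K).subgroupOf K) (MackeyPiece H K σ (s : G))) k
            (e v s) := by
  refine ⟨LinearEquiv.ofLinear (mackeyFwd H K σ S) (mackeyInv H K σ S hS)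
    (mackey_right_inv H K σ S hS) (mackey_left_inv H K σ S hS), ?_⟩
  intro k v s
  apply Subtype.ext
  funext k₁
  simp only [LinearEquiv.ofLinear_apply]
  show (v : G → V) ((s : G)⁻¹ * (k₁ : G) * (k : G)) =
    (v : G → V) ((s : G)⁻¹ * ((k₁ * k : K) : G))
  congr 1
  push_cast
  group
end
end

section
/- Let G be a finite group, K a subgroup, and τ, τ' irreducible representations of K. If there exists g ∈ G with Hom_{K ∩ gKg⁻¹}(τ, ^gτ') ≠ 0 (τ and τ' intertwine in G), then Ind_K^G τ and Ind_K^G τ' share a common irreducible constituent. -/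
set_option synthInstance.maxHeartbeats 1000000
set_option maxHeartbeats 1000000

noncomputable section

open Function

variable {G : Type*} [Group G]

section Aux

open FiniteDimensional Module

/-- Maschke, by hand: every invariant submodule has an invariant complement. -/
lemma maschke_compl [Finite G] {W : Type*} [AddCommGroup W] [Module ℂ W]
    (ρ : Representation ℂ G W) (N : Submodule ℂ W) (hN : RepInvariant ρ N) :
    ∃ C : Submodule ℂ W, RepInvariant ρ C ∧ IsCompl N C := by
  haveI : Fintype G := Fintype.ofFinite G
  obtain ⟨M, hM⟩ := Submodule.exists_isCompl N
  set p : W →ₗ[ℂ] W := N.subtype ∘ₗ (N.linearProjOfIsCompl M hM) with hp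
  have hpmem : ∀ w, p w ∈ N := fun w => (N.linearProjOfIsCompl M hM w).2
  have hpid : ∀ w ∈ N, p w = w := fun w hw => by
    have := Submodule.projectionOnto_apply_left hM ⟨w, hw⟩
    simp only [hp, LinearMap.comp_apply, Submodule.subtype_apply]
    exact congrArg Subtype.val this
  set c : ℂ := (Nat.card G : ℂ)⁻¹ with hc
  set q : W →ₗ[ℂ] W := c • ∑ s : G, ρ s ∘ₗ p ∘ₗ ρ s⁻¹ with hq
  have hqapp : ∀ w, q w = c • ∑ s : G, ρ s (p (ρ s⁻¹ w)) := fun w => by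
    simp [hq, LinearMap.sum_apply]
  have hqmem : ∀ w, q w ∈ N := fun w => by
    rw [hqapp]
    exact N.smul_mem _ (Submodule.sum_mem _ fun s _ => hN s _ (hpmem _))
  have hcard : (Nat.card G : ℂ) ≠ 0 := by
    exact_mod_cast Nat.card_pos.ne'
  have hqid : ∀ w ∈ N, q w = w := by
    intro w hw
    rw [hqapp]
    have : ∀ s : G, ρ s (p (ρ s⁻¹ w)) = w := fun s => by
      rw [hpid _ (hN s⁻¹ w hw), ← Module.End.mul_apply, ← map_mul, mul_inv_cancel, map_one,
        Module.End.one_apply]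
    simp only [this, Finset.sum_const, Finset.card_univ]
    rw [← Nat.cast_smul_eq_nsmul ℂ, smul_smul, hc, Nat.card_eq_fintype_card,
      inv_mul_cancel₀ (by rwa [Nat.card_eq_fintype_card] at hcard), one_smul]
  have e1 : ∀ a b : G, ∀ u : W, ρ a (ρ b u) = ρ (a * b) u := fun a b u => by
    rw [map_mul, Module.End.mul_apply]
  have hqequiv : ∀ (g : G) (w : W), q (ρ g w) = ρ g (q w) := by
    intro g w
    rw [hqapp, hqapp, map_smul, map_sum]
    congr 1
    refine (Fintype.sum_equiv (Equiv.mulLeft g) _ _ fun s => ?_).symm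
    simp only [Equiv.coe_mulLeft]
    rw [e1 g s, e1 (g*s)⁻¹ g w]
    have : (g * s)⁻¹ * g = s⁻¹ := by group
    rw [this]
  refine ⟨LinearMap.ker q, fun g v hv => ?_, ?_, ?_⟩
  · rw [LinearMap.mem_ker] at hv ⊢
    rw [hqequiv, hv, map_zero]
  · rw [Submodule.disjoint_def]
    intro x hxN hxK
    rw [LinearMap.mem_ker] at hxK
    rw [← hqid x hxN, hxK]
  · rw [codisjoint_iff, eq_top_iff]
    intro w _
    rw [Submodule.mem_sup]
    refine ⟨q w, hqmem w, w - q w, ?_, by abel⟩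
    rw [LinearMap.mem_ker, map_sub, hqid _ (hqmem w), sub_self]

/-- Transport a representation along a linear equivalence. -/
def RepTransport {V W : Type*} [AddCommGroup V] [Module ℂ V] [AddCommGroup W] [Module ℂ W]
    (ρ : Representation ℂ G V) (e : V ≃ₗ[ℂ] W) : Representation ℂ G W where
  toFun g := e.toLinearMap ∘ₗ ρ g ∘ₗ e.symm.toLinearMap
  map_one' := by ext w; simp
  map_mul' a b := by ext w; simp [map_mul, Module.End.mul_apply]

lemma repTransport_apply {V W : Type*} [AddCommGroup V] [Module ℂ V] [AddCommGroup W]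
    [Module ℂ W] (ρ : Representation ℂ G V) (e : V ≃ₗ[ℂ] W) (g : G) (w : W) :
    RepTransport ρ e g w = e (ρ g (e.symm w)) := rfl

/-- If there is a nonzero equivariant map between two representations of a finite group
(source finite dimensional), they share a common irreducible constituent. -/
lemma common_of_hom [Finite G] {W₁ W₂ : Type*} [AddCommGroup W₁] [Module ℂ W₁]
    [FiniteDimensional ℂ W₁] [AddCommGroup W₂] [Module ℂ W₂]
    (ρ₁ : Representation ℂ G W₁) (ρ₂ : Representation ℂ G W₂)
    (h : HomNonzero ρ₁ ρ₂) : CommonConstituent ρ₁ ρ₂ := by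
  obtain ⟨F, hF, hF0⟩ := h
  have hker : RepInvariant ρ₁ (LinearMap.ker F) := by
    intro g v hv
    rw [LinearMap.mem_ker] at hv ⊢
    rw [hF, hv, map_zero]
  obtain ⟨C, hCinv, hC⟩ := maschke_compl ρ₁ _ hker
  have hC0 : C ≠ ⊥ := by
    intro hbot
    apply hF0
    rw [← LinearMap.ker_eq_top]
    have := hC.2
    rw [codisjoint_iff, hbot, sup_bot_eq] at this
    exact this
  -- pick a minimal nonzero invariant submodule contained in C
  set P : ℕ → Prop := fun n => ∃ U : Submodule ℂ W₁,
    U ≤ C ∧ U ≠ ⊥ ∧ RepInvariant ρ₁ U ∧ Module.finrank ℂ U = n with hP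
  haveI : DecidablePred P := Classical.decPred P
  have hex : ∃ n, P n := ⟨Module.finrank ℂ C, C, le_rfl, hC0, hCinv, rfl⟩
  obtain ⟨U, hUC, hU0, hUinv, hUrank⟩ := Nat.find_spec hex
  have hmin : ∀ U' : Submodule ℂ W₁, U' ≤ U → U' ≠ ⊥ → RepInvariant ρ₁ U' → U' = U := by
    intro U' hle h0 hinv
    refine Submodule.eq_of_le_of_finrank_le hle ?_
    rw [hUrank]
    exact Nat.find_min' hex ⟨U', hle.trans hUC, h0, hinv, rfl⟩
  haveI : Nontrivial U := Submodule.nontrivial_iff_ne_bot.mpr hU0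
  set n := Module.finrank ℂ U with hn
  set e : U ≃ₗ[ℂ] (Fin n → ℂ) := (Module.finBasis ℂ U).equivFun with he
  set σ := SubRep ρ₁ U hUinv with hσ
  set θ := RepTransport σ e with hθ
  have hsub : ∀ (g : G) (u : U), (σ g u : W₁) = ρ₁ g (u : W₁) := fun g u => rfl
  refine ⟨n, θ, ⟨?_, ?_⟩, ?_, ?_⟩
  · exact e.symm.toEquiv.nontrivial
  · -- irreducibility
    intro U' hU'inv
    -- push U' down to a submodule of W₁
    set D : Submodule ℂ W₁ := (U'.map e.symm.toLinearMap).map U.subtype with hD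
    have hDU : D ≤ U := by
      rw [hD]
      exact Submodule.map_subtype_le _ _
    have hDinv : RepInvariant ρ₁ D := by
      rintro g v ⟨u, ⟨w, hw, rfl⟩, rfl⟩
      refine ⟨σ g (e.symm w), ⟨θ g w, hU'inv g w hw, ?_⟩, (hsub g _).symm⟩
      show e.symm (θ g w) = _
      rw [repTransport_apply, LinearEquiv.symm_apply_apply]
    by_cases hDbot : D = ⊥
    · left
      rw [eq_bot_iff]
      intro w hw
      have : (e.symm w : W₁) ∈ D := ⟨e.symm w, ⟨w, hw, rfl⟩, rfl⟩
      rw [hDbot, Submodule.mem_bot] at this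
      have h2 : e.symm w = 0 := Subtype.ext this
      rw [Submodule.mem_bot]
      rw [LinearEquiv.map_eq_zero_iff] at h2
      exact h2
    · right
      have hDU' : D = U := hmin D hDU hDbot hDinv
      rw [eq_top_iff]
      intro w _
      have hmem : ((e.symm w : W₁)) ∈ D := by rw [hDU']; exact (e.symm w).2
      obtain ⟨u, ⟨w', hw', hw'u⟩, hu⟩ := hmem
      have h1 : u = e.symm w := Subtype.ext hu
      rw [h1] at hw'u
      have h3 : w' = w := by simpa using congrArg e hw'u
      rwa [← h3]
  · -- Hom θ ρ₁ nonzero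
    refine ⟨U.subtype ∘ₗ e.symm.toLinearMap, fun g w => ?_, ?_⟩
    · show (((e.symm : (Fin n → ℂ) →ₗ[ℂ] U) (θ g w) : U) : W₁) = ρ₁ g ((e.symm : (Fin n → ℂ) →ₗ[ℂ] U) w : W₁)
      show ((e.symm (θ g w) : U) : W₁) = ρ₁ g ((e.symm w : U) : W₁)
      rw [repTransport_apply, LinearEquiv.symm_apply_apply, hsub]
    · obtain ⟨u₀, hu₀⟩ := exists_ne (0 : U)
      intro hcontra
      have := LinearMap.congr_fun hcontra (e u₀)
      simp only [LinearMap.coe_comp, Function.comp_apply] at this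
      apply hu₀
      have h2 : (e.symm (e u₀) : W₁) = 0 := this
      rw [LinearEquiv.symm_apply_apply] at h2
      exact Subtype.ext h2
  · -- Hom θ ρ₂ nonzero
    refine ⟨F ∘ₗ U.subtype ∘ₗ e.symm.toLinearMap, fun g w => ?_, ?_⟩
    · show F (((e.symm : (Fin n → ℂ) →ₗ[ℂ] U) (θ g w) : U) : W₁) = ρ₂ g (F ((e.symm : (Fin n → ℂ) →ₗ[ℂ] U) w : W₁))
      show F ((e.symm (θ g w) : U) : W₁) = ρ₂ g (F ((e.symm w : U) : W₁))
      rw [repTransport_apply, LinearEquiv.symm_apply_apply, hsub, hF]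
    · obtain ⟨u₀, hu₀⟩ := exists_ne (0 : U)
      intro hcontra
      have := LinearMap.congr_fun hcontra (e u₀)
      simp only [LinearMap.coe_comp, Function.comp_apply, LinearEquiv.coe_coe,
        LinearEquiv.symm_apply_apply, LinearMap.zero_apply] at this
      have hker' : (u₀ : W₁) ∈ LinearMap.ker F := this
      have hmemC : (u₀ : W₁) ∈ C := hUC u₀.2
      have : (u₀ : W₁) = 0 := by
        have hd := hC.1
        rw [Submodule.disjoint_def] at hd
        exact hd _ hker' hmemC
      exact hu₀ (Subtype.ext this)

end Aux

/-- if two irreducible representations `τ, τ'` of `K ≤ G` intertwine in `G`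
(there is `g ∈ G` and a nonzero `K ∩ gKg⁻¹`-equivariant map `τ → ^gτ'`), then `Ind_K^G τ`
and `Ind_K^G τ'` share a common irreducible constituent. -/
theorem stmt6 [Finite G] (K : Subgroup G)
    {V V' : Type*} [AddCommGroup V] [Module ℂ V] [FiniteDimensional ℂ V]
    [AddCommGroup V'] [Module ℂ V'] [FiniteDimensional ℂ V']
    (τ : Representation ℂ K V) (hτ : RepIrreducible τ)
    (τ' : Representation ℂ K V') (hτ' : RepIrreducible τ')
    (g : G) (f : V →ₗ[ℂ] V') (hf0 : f ≠ 0)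
    (hf : IsRepHom
      (τ.comp (Subgroup.inclusion (inf_le_left : K ⊓ ConjSubgroup g K ≤ K)))
      (ConjRepOn τ' g (K ⊓ ConjSubgroup g K)
        (fun x hx => mem_conjSubgroup.mp (Subgroup.mem_inf.mp hx).2)) f) :
    CommonConstituent (Ind K τ) (Ind K τ') := by
  classical
  haveI : Fintype G := Fintype.ofFinite G
  haveI : Fintype K := Fintype.ofFinite K
  -- the intertwining operator on induced representations
  have hmemF : ∀ φ : IndCarrier K τ,
      (fun x => ∑ k : K, τ' k (f (φ.1 (g * (k:G)⁻¹ * x)))) ∈ IndCarrier K τ' := by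
    intro φ h x
    show ∑ k : K, τ' k (f (φ.1 (g * (k:G)⁻¹ * ((h:G) * x))))
        = τ' h (∑ k : K, τ' k (f (φ.1 (g * (k:G)⁻¹ * x))))
    rw [map_sum]
    refine (Fintype.sum_equiv (Equiv.mulLeft h)
      (fun k => τ' h (τ' k (f (φ.1 (g * (k:G)⁻¹ * x)))))
      (fun k => τ' k (f (φ.1 (g * (k:G)⁻¹ * ((h:G) * x))))) fun k => ?_).symm
    simp only [Equiv.coe_mulLeft]
    have hg : g * (((h * k : K)):G)⁻¹ * ((h:G) * x) = g * ((k:G))⁻¹ * x := by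
      push_cast
      group
    rw [hg, map_mul, Module.End.mul_apply]
  set Fl : IndCarrier K τ →ₗ[ℂ] IndCarrier K τ' :=
    { toFun := fun φ => ⟨fun x => ∑ k : K, τ' k (f (φ.1 (g * (k:G)⁻¹ * x))), hmemF φ⟩
      map_add' := fun φ ψ => Subtype.ext (funext fun x => by
        simp [Finset.sum_add_distrib])
      map_smul' := fun c φ => Subtype.ext (funext fun x => by
        simp [Finset.smul_sum]) } with hFl
  have hFhom : IsRepHom (Ind K τ) (Ind K τ') Fl := by
    intro g₀ φ
    apply Subtype.ext; funext x
    show ∑ k : K, τ' k (f (φ.1 (g * (k:G)⁻¹ * x * g₀)))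
        = ∑ k : K, τ' k (f (φ.1 (g * (k:G)⁻¹ * (x * g₀))))
    simp [mul_assoc]
  obtain ⟨v, hv⟩ : ∃ v, f v ≠ 0 := by
    by_contra hc
    push_neg at hc
    exact hf0 (LinearMap.ext fun v => hc v)
  set φv : G → V := fun x => if hx : x ∈ K then τ ⟨x, hx⟩ v else 0 with hφvdef
  have hφv : φv ∈ IndCarrier K τ := by
    intro h x
    by_cases hx : x ∈ K
    · have hhx : (h:G) * x ∈ K := K.mul_mem h.2 hx
      simp only [hφvdef, dif_pos hx, dif_pos hhx]
      have : (⟨(h:G)*x, hhx⟩ : K) = h * ⟨x, hx⟩ := rfl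
      rw [this, map_mul, Module.End.mul_apply]
    · have hhx : ¬ ((h:G) * x ∈ K) := by
        intro hmem
        have := K.mul_mem (K.inv_mem h.2) hmem
        rw [← mul_assoc, inv_mul_cancel, one_mul] at this
        exact hx this
      simp only [hφvdef, dif_neg hx, dif_neg hhx, map_zero]
  have hterm : ∀ k : K, τ' k (f (φv (g * (k:G)⁻¹ * g⁻¹)))
      = if g * (k:G)⁻¹ * g⁻¹ ∈ K then f v else 0 := by
    intro k
    by_cases hk : g * (k:G)⁻¹ * g⁻¹ ∈ K
    · rw [if_pos hk]
      have hconj : g * (k:G)⁻¹ * g⁻¹ ∈ ConjSubgroup g K := by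
        rw [mem_conjSubgroup]
        have h1 : g⁻¹ * (g * (k:G)⁻¹ * g⁻¹) * g = (k:G)⁻¹ := by group
        rw [h1]
        exact K.inv_mem k.2
      have hmem : g * (k:G)⁻¹ * g⁻¹ ∈ K ⊓ ConjSubgroup g K := Subgroup.mem_inf.mpr ⟨hk, hconj⟩
      have hfe := hf ⟨_, hmem⟩ v
      have hincl : (Subgroup.inclusion (inf_le_left : K ⊓ ConjSubgroup g K ≤ K))
          (⟨_, hmem⟩ : (K ⊓ ConjSubgroup g K : Subgroup G)) = ⟨g * (k:G)⁻¹ * g⁻¹, hk⟩ := rfl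
      rw [MonoidHom.comp_apply, hincl] at hfe
      have hconjval : (ConjRepOn τ' g (K ⊓ ConjSubgroup g K)
            (fun x hx => mem_conjSubgroup.mp (Subgroup.mem_inf.mp hx).2))
            (⟨_, hmem⟩ : (K ⊓ ConjSubgroup g K : Subgroup G)) (f v) = τ' k⁻¹ (f v) := by
        show τ' ⟨g⁻¹ * (g * (k:G)⁻¹ * g⁻¹) * g, _⟩ (f v) = τ' k⁻¹ (f v)
        exact congrArg (fun z : K => τ' z (f v)) (Subtype.ext (by push_cast; group))
      rw [hconjval] at hfe
      have hφval : φv (g * (k:G)⁻¹ * g⁻¹) = τ ⟨g * (k:G)⁻¹ * g⁻¹, hk⟩ v := dif_pos hk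
      rw [hφval, hfe, ← Module.End.mul_apply, ← map_mul, mul_inv_cancel, map_one,
        Module.End.one_apply]
    · rw [if_neg hk]
      have hφval : φv (g * (k:G)⁻¹ * g⁻¹) = 0 := dif_neg hk
      rw [hφval, map_zero, map_zero]
  have hval : (Fl ⟨φv, hφv⟩).1 g⁻¹ ≠ 0 := by
    have h0 : (Fl ⟨φv, hφv⟩).1 g⁻¹ = ∑ k : K, τ' k (f (φv (g * (k:G)⁻¹ * g⁻¹))) := rfl
    rw [h0, Finset.sum_congr rfl (fun k _ => hterm k), Finset.sum_ite,
      Finset.sum_const, Finset.sum_const, smul_zero, add_zero]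
    have hone : (1 : K) ∈ Finset.univ.filter (fun k : K => g * (k:G)⁻¹ * g⁻¹ ∈ K) := by
      simpa using K.one_mem
    have hcard : (Finset.univ.filter (fun k : K => g * (k:G)⁻¹ * g⁻¹ ∈ K)).card ≠ 0 := by
      intro hzero
      rw [Finset.card_eq_zero] at hzero
      rw [hzero] at hone
      exact absurd hone (Finset.notMem_empty _)
    rw [← Nat.cast_smul_eq_nsmul ℂ]
    exact smul_ne_zero (by exact_mod_cast hcard) hv
  have hFl0 : Fl ≠ 0 := by
    intro hc
    apply hval
    rw [hc]
    rfl
  exact common_of_hom _ _ ⟨Fl, hFhom, hFl0⟩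
end
end

section
/- Let G be a finite group, K a subgroup, and τ, τ' irreducible complex representations of K such that Hom_G(Ind_K^G τ, π) ≠ 0 and Hom_G(Ind_K^G τ', π) ≠ 0 for some irreducible representation π of G. Then there exists g ∈ G such that Hom_{K ∩ gKg⁻¹}(τ, ^gτ') ≠ 0. -/
set_option synthInstance.maxHeartbeats 1000000
set_option maxHeartbeats 1000000

noncomputable section

open Function

variable {G : Type*} [Group G]

section Aux

variable (K : Subgroup G) {V : Type*} [AddCommGroup V] [Module ℂ V]

open Classical in
/-- Extension by zero: `v ↦ (x ↦ σ x v if x ∈ K, else 0)`, landing in the induced space. -/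
def extL (σ : Representation ℂ K V) : V →ₗ[ℂ] IndCarrier K σ where
  toFun v := ⟨fun x => if h : x ∈ K then σ ⟨x, h⟩ v else 0, by
    intro h g
    dsimp only
    by_cases hg : g ∈ K
    · rw [dif_pos ((mul_mem_cancel_left h.2).mpr hg), dif_pos hg]
      have : (⟨(h : G) * g, (mul_mem_cancel_left h.2).mpr hg⟩ : K) = h * ⟨g, hg⟩ := rfl
      rw [this, map_mul]
      rfl
    · rw [dif_neg (fun hm => hg ((mul_mem_cancel_left h.2).mp hm)), dif_neg hg, map_zero]⟩
  map_add' a b := by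
    apply Subtype.ext
    funext x
    by_cases h : x ∈ K <;> simp [h]
  map_smul' c a := by
    apply Subtype.ext
    funext x
    by_cases h : x ∈ K <;> simp [h]

lemma extL_apply (σ : Representation ℂ K V) (v : V) (x : G) (hx : x ∈ K) :
    ((extL K σ v : IndCarrier K σ) : G → V) x = σ ⟨x, hx⟩ v := dif_pos hx

lemma extL_apply_not (σ : Representation ℂ K V) (v : V) (x : G) (hx : ¬ x ∈ K) :
    ((extL K σ v : IndCarrier K σ) : G → V) x = 0 := dif_neg hx

lemma ind_extL (σ : Representation ℂ K V) (k : K) (v : V) :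
    Ind K σ (k : G) (extL K σ v) = extL K σ (σ k v) := by
  apply Subtype.ext
  funext x
  show ((extL K σ v : IndCarrier K σ) : G → V) (x * k) = _
  by_cases hx : x ∈ K
  · rw [extL_apply K σ v (x * k) (mul_mem hx k.2), extL_apply K σ (σ k v) x hx]
    have : (⟨x * k, mul_mem hx k.2⟩ : K) = ⟨x, hx⟩ * k := rfl
    rw [this, map_mul]
    rfl
  · rw [extL_apply_not K σ v (x * k) (fun hm => hx (by simpa using mul_mem hm (inv_mem k.2))),
      extL_apply_not K σ _ x hx]

lemma spanning [Fintype G] [Fintype K] (σ : Representation ℂ K V) (f : IndCarrier K σ) :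
    (Fintype.card K : ℂ) • f = ∑ g : G, Ind K σ g⁻¹ (extL K σ ((f : G → V) g)) := by
  classical
  apply Subtype.ext
  funext x
  have hco : ((∑ g : G, Ind K σ g⁻¹ (extL K σ ((f : G → V) g)) : IndCarrier K σ) : G → V) x
      = ∑ g : G, ((Ind K σ g⁻¹ (extL K σ ((f : G → V) g)) : IndCarrier K σ) : G → V) x := by
    rw [Submodule.coe_sum]
    exact Finset.sum_apply x Finset.univ _
  show (Fintype.card K : ℂ) • (f : G → V) x = _
  rw [hco]
  have key : ∀ g : G, ((Ind K σ g⁻¹ (extL K σ ((f : G → V) g)) : IndCarrier K σ) : G → V) x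
      = if x * g⁻¹ ∈ K then (f : G → V) x else 0 := by
    intro g
    show ((extL K σ ((f : G → V) g) : IndCarrier K σ) : G → V) (x * g⁻¹) = _
    by_cases h : x * g⁻¹ ∈ K
    · rw [if_pos h, extL_apply K σ _ _ h]
      have hg : g = ((⟨x * g⁻¹, h⟩ : K) : G)⁻¹ * x := by group
      have : (f : G → V) g = σ (⟨x * g⁻¹, h⟩ : K)⁻¹ ((f : G → V) x) := by
        conv_lhs => rw [hg]
        exact f.2 (⟨x * g⁻¹, h⟩ : K)⁻¹ x
      rw [this, ← LinearMap.comp_apply, ← Module.End.mul_eq_comp, ← map_mul, mul_inv_cancel,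
        map_one, Module.End.one_apply]
    · rw [if_neg h, extL_apply_not K σ _ _ h]
  simp only [key]
  rw [Finset.sum_ite, Finset.sum_const, Finset.sum_const_zero, add_zero]
  rw [← Fintype.card_subtype, Nat.cast_smul_eq_nsmul]
  congr 1
  apply Fintype.card_congr
  exact { toFun := fun u => ⟨(u : G)⁻¹ * x, by
            have : x * ((u : G)⁻¹ * x)⁻¹ = (u : G) := by group
            rw [this]; exact u.2⟩
          invFun := fun g => ⟨x * (g : G)⁻¹, g.2⟩
          left_inv := fun g => Subtype.ext (by group)
          right_inv := fun u => Subtype.ext (by group) }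

lemma ind_span [Fintype G] [Fintype K] (σ : Representation ℂ K V)
    {X : Type*} [AddCommGroup X] [Module ℂ X]
    (A : IndCarrier K σ →ₗ[ℂ] X)
    (hA : ∀ (g : G) (v : V), A (Ind K σ g (extL K σ v)) = 0) : A = 0 := by
  ext f
  have h := congrArg A (spanning K σ f)
  rw [map_smul, map_sum] at h
  simp only [hA, Finset.sum_const_zero] at h
  have hc : (Fintype.card K : ℂ) ≠ 0 := Nat.cast_ne_zero.mpr Fintype.card_ne_zero
  have := smul_eq_zero.mp h
  simpa [hc] using this

end Aux

/-- two irreducible representations `τ, τ'` of `K ≤ G` which both occur in a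
common irreducible representation `π` of the finite group `G` must intertwine in `G`:
there are `g ∈ G` and a nonzero `K ∩ gKg⁻¹`-equivariant map `τ → ^gτ'`. -/
theorem stmt7 [Finite G] (K : Subgroup G)
    {V V' W : Type*} [AddCommGroup V] [Module ℂ V] [FiniteDimensional ℂ V]
    [AddCommGroup V'] [Module ℂ V'] [FiniteDimensional ℂ V']
    [AddCommGroup W] [Module ℂ W] [FiniteDimensional ℂ W]
    (τ : Representation ℂ K V) (hτ : RepIrreducible τ)
    (τ' : Representation ℂ K V') (hτ' : RepIrreducible τ')
    (π : Representation ℂ G W) (hπ : RepIrreducible π)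
    (h1 : HomNonzero (Ind K τ) π) (h2 : HomNonzero (Ind K τ') π) :
    ∃ (g : G) (f : V →ₗ[ℂ] V'), f ≠ 0 ∧
      IsRepHom
        (τ.comp (Subgroup.inclusion (inf_le_left : K ⊓ ConjSubgroup g K ≤ K)))
        (ConjRepOn τ' g (K ⊓ ConjSubgroup g K)
          (fun x hx => mem_conjSubgroup.mp (Subgroup.mem_inf.mp hx).2)) f := by
    classical
  haveI : Fintype G := Fintype.ofFinite G
  haveI : Fintype K := Fintype.ofFinite K
  haveI : Nontrivial V' := hτ'.1
  obtain ⟨A, hA, hA0⟩ := h1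
  obtain ⟨B, hB, hB0⟩ := h2
  -- Step 1: Frobenius reciprocity gives a nonzero K-map b : τ' → Res π.
  set b : V' →ₗ[ℂ] W := B ∘ₗ extL K τ' with hbdef
  have hbK : ∀ (k : K) (v : V'), b (τ' k v) = π (k : G) (b v) := by
    intro k v
    have h1' : extL K τ' (τ' k v) = Ind K τ' (k : G) (extL K τ' v) := (ind_extL K τ' k v).symm
    rw [hbdef, LinearMap.comp_apply, h1', hB]
    rfl
  have hb0 : b ≠ 0 := by
    intro hb
    apply hB0
    apply ind_span K τ'
    intro g v
    rw [hB]
    have hzero : B (extL K τ' v) = 0 := by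
      have := congrArg (fun m => m v) hb
      simpa [hbdef] using this
    rw [hzero, map_zero]
  have hbinj : Function.Injective b := by
    rw [← LinearMap.ker_eq_bot]
    have hinv : RepInvariant τ' (LinearMap.ker b) := by
      intro k v hv
      rw [LinearMap.mem_ker] at hv ⊢
      rw [hbK k v, hv, map_zero]
    rcases hτ'.2 _ hinv with h | h
    · exact h
    · exfalso
      apply hb0
      ext v
      have : v ∈ LinearMap.ker b := h ▸ Submodule.mem_top
      simpa using this
  -- Step 2: Maschke-type averaging gives a nonzero K-map p0 : Res π → τ'.
  obtain ⟨C, hC⟩ := Submodule.exists_isCompl (LinearMap.range b)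
  set q : W →ₗ[ℂ] (LinearMap.range b) := (LinearMap.range b).projectionOnto C hC with hqdef
  set e : V' ≃ₗ[ℂ] LinearMap.range b := LinearEquiv.ofInjective b hbinj with hedef
  have hqb : ∀ v : V', (e.symm : LinearMap.range b →ₗ[ℂ] V') (q (b v)) = v := by
    intro v
    have h1' : b v = ((e v : LinearMap.range b) : W) := by
      rw [hedef, LinearEquiv.ofInjective_apply]
    have h2' : q (b v) = e v := by
      rw [h1', hqdef, Submodule.linearProjOfIsCompl_apply_left hC]
    rw [h2']
    simp
  set p0 : W →ₗ[ℂ] V' :=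
    ∑ k : K, (τ' k⁻¹) ∘ₗ (e.symm : LinearMap.range b →ₗ[ℂ] V') ∘ₗ q ∘ₗ (π (k : G)) with hp0def
  have hp0K : ∀ (k₀ : K) (w : W), p0 (π (k₀ : G) w) = τ' k₀ (p0 w) := by
    intro k₀ w
    have lhs : p0 (π (k₀ : G) w)
        = ∑ k : K, τ' k⁻¹ ((e.symm : LinearMap.range b →ₗ[ℂ] V') (q (π ((k : G) * k₀) w))) := by
      rw [hp0def, LinearMap.sum_apply]
      refine Finset.sum_congr rfl fun k _ => ?_
      simp [map_mul]
    have rhs : τ' k₀ (p0 w)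
        = ∑ k : K, τ' (k₀ * k⁻¹) ((e.symm : LinearMap.range b →ₗ[ℂ] V') (q (π (k : G) w))) := by
      rw [hp0def, LinearMap.sum_apply, map_sum]
      refine Finset.sum_congr rfl fun k _ => ?_
      simp [map_mul]
    rw [lhs, rhs]
    refine Fintype.sum_equiv (Equiv.mulRight k₀) _ _ fun k => ?_
    have h1' : (k₀ * ((Equiv.mulRight k₀) k)⁻¹ : K) = k⁻¹ := by
      rw [Equiv.coe_mulRight, mul_inv_rev, ← mul_assoc, mul_inv_cancel, one_mul]
    have h2' : (((Equiv.mulRight k₀) k : K) : G) = (k : G) * (k₀ : G) := rfl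
    rw [h1', h2']
  have hp0b : ∀ v : V', p0 (b v) = (Fintype.card K : ℂ) • v := by
    intro v
    have h1' : p0 (b v)
        = ∑ k : K, τ' k⁻¹ ((e.symm : LinearMap.range b →ₗ[ℂ] V') (q (b (τ' k v)))) := by
      rw [hp0def, LinearMap.sum_apply]
      refine Finset.sum_congr rfl fun k _ => ?_
      simp [← hbK k v]
    rw [h1']
    have h2' : ∀ k : K, τ' k⁻¹ ((e.symm : LinearMap.range b →ₗ[ℂ] V') (q (b (τ' k v)))) = v := by
      intro k
      rw [hqb (τ' k v), ← LinearMap.comp_apply, ← Module.End.mul_eq_comp, ← map_mul,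
        inv_mul_cancel, map_one, Module.End.one_apply]
    simp only [h2']
    rw [Finset.sum_const, Finset.card_univ, Nat.cast_smul_eq_nsmul]
  -- Step 3: A is surjective.
  have hAsurj : Function.Surjective A := by
    rw [← LinearMap.range_eq_top]
    have hinv : RepInvariant π (LinearMap.range A) := by
      rintro g w ⟨f, rfl⟩
      exact ⟨Ind K τ g f, hA g f⟩
    rcases hπ.2 _ hinv with h | h
    · exfalso
      apply hA0
      ext f
      have : A f ∈ (⊥ : Submodule ℂ W) := h ▸ LinearMap.mem_range_self A f
      simpa using this
    · exact h
  -- Step 4: Frobenius reciprocity in the other direction: Ψ : π → Ind τ'.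
  have Ψmem : ∀ w : W, (fun x => p0 (π x w)) ∈ IndCarrier K τ' := by
    intro w h g
    have : π ((h : G) * g) w = π (h : G) (π g w) := by rw [map_mul]; rfl
    dsimp only
    rw [this, hp0K h (π g w)]
  set Ψ : W →ₗ[ℂ] IndCarrier K τ' :=
    { toFun := fun w => ⟨fun x => p0 (π x w), Ψmem w⟩
      map_add' := fun w w' => Subtype.ext (funext fun x => by simp)
      map_smul' := fun c w => Subtype.ext (funext fun x => by simp) } with hΨdef
  have hΨeq : ∀ (g : G) (w : W), Ψ (π g w) = Ind K τ' g (Ψ w) := by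
    intro g w
    apply Subtype.ext
    funext x
    show p0 (π x (π g w)) = p0 (π (x * g) w)
    rw [map_mul]
    rfl
  -- Step 5: the composite Φ : Ind τ → Ind τ' is a nonzero G-map.
  set Φ : IndCarrier K τ →ₗ[ℂ] IndCarrier K τ' := Ψ ∘ₗ A with hΦdef
  have hΦeq : ∀ (g : G) (f : IndCarrier K τ), Φ (Ind K τ g f) = Ind K τ' g (Φ f) := by
    intro g f
    rw [hΦdef, LinearMap.comp_apply, hA g f, hΨeq]
    rfl
  have hΦ0 : Φ ≠ 0 := by
    obtain ⟨v₀, hv₀⟩ := exists_ne (0 : V')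
    obtain ⟨f₀, hf₀⟩ := hAsurj (b v₀)
    intro hΦz
    have h1' : ((Φ f₀ : IndCarrier K τ') : G → V') 1 = p0 (b v₀) := by
      rw [hΦdef, LinearMap.comp_apply, hf₀]
      show p0 (π 1 (b v₀)) = p0 (b v₀)
      rw [map_one]
      rfl
    rw [hΦz] at h1'
    have h2' : p0 (b v₀) ≠ 0 := by
      rw [hp0b]
      exact smul_ne_zero (Nat.cast_ne_zero.mpr Fintype.card_ne_zero) hv₀
    exact h2' (by simpa using h1'.symm)
  -- Step 6: Mackey extraction.
  set T : G → (V →ₗ[ℂ] V') := fun g =>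
    (LinearMap.proj g⁻¹ : (G → V') →ₗ[ℂ] V') ∘ₗ (IndCarrier K τ').subtype ∘ₗ Φ ∘ₗ extL K τ
    with hTdef
  have hTapp : ∀ (g : G) (v : V), T g v = ((Φ (extL K τ v) : IndCarrier K τ') : G → V') g⁻¹ :=
    fun g v => rfl
  have hg : ∃ g : G, T g ≠ 0 := by
    by_contra hcon
    push_neg at hcon
    apply hΦ0
    apply ind_span K τ
    intro g v
    have hzero : Φ (extL K τ v) = 0 := by
      apply Subtype.ext
      funext x
      have := congrArg (fun m => m v) (hcon x⁻¹)
      simpa [hTapp] using this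
    rw [hΦeq, hzero, map_zero]
  obtain ⟨g, hTg⟩ := hg
  refine ⟨g, T g, hTg, ?_⟩
  intro x v
  have hx1 : (x : G) ∈ K := (Subgroup.mem_inf.mp x.2).1
  have hx2 : g⁻¹ * (x : G) * g ∈ K := mem_conjSubgroup.mp (Subgroup.mem_inf.mp x.2).2
  have hincl : ((τ.comp (Subgroup.inclusion (inf_le_left : K ⊓ ConjSubgroup g K ≤ K))) x) v
      = τ ⟨(x : G), hx1⟩ v := rfl
  rw [hincl]
  have step1 : T g (τ ⟨(x : G), hx1⟩ v)
      = ((Φ (extL K τ v) : IndCarrier K τ') : G → V') (g⁻¹ * (x : G)) := by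
    rw [hTapp, ← ind_extL K τ ⟨(x : G), hx1⟩ v, hΦeq]
    rfl
  have step2 : ((Φ (extL K τ v) : IndCarrier K τ') : G → V') (g⁻¹ * (x : G))
      = τ' ⟨g⁻¹ * (x : G) * g, hx2⟩ (((Φ (extL K τ v) : IndCarrier K τ') : G → V') g⁻¹) := by
    have hmul : g⁻¹ * (x : G) = (g⁻¹ * (x : G) * g) * g⁻¹ := by group
    conv_lhs => rw [hmul]
    exact (Φ (extL K τ v)).2 ⟨g⁻¹ * (x : G) * g, hx2⟩ g⁻¹
  rw [step1, step2, hTapp]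
  rfl
end
end

section
/- Let G be a finite group, N ◁ G with G/N abelian, and σ an irreducible representation of N. If τ and τ' are two irreducible subrepresentations of Ind_N^G σ, then τ' ≅ τ ⊗ χ for some character χ of G/N (inflated to G). -/
set_option synthInstance.maxHeartbeats 1000000
set_option maxHeartbeats 1000000

noncomputable section

open Function

variable {G : Type*} [Group G]

namespace Stmt8Aux


/-- conjugation homomorphism on a normal subgroup -/
def conjHom (N : Subgroup G) [hN : N.Normal] (a : G) : N →* N where
  toFun n := ⟨a * n * a⁻¹, hN.conj_mem n.1 n.2 a⟩
  map_one' := by ext; simp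
  map_mul' x y := by ext; push_cast; group

lemma conjRep_irreducible {V : Type*} [AddCommGroup V] [Module ℂ V] {N : Subgroup G} [hN : N.Normal]
    {σ : Representation ℂ N V} (hσ : RepIrreducible σ) (a : G) :
    RepIrreducible (σ.comp (conjHom N a)) := by
  refine ⟨hσ.1, fun W hW => hσ.2 W ?_⟩
  intro n v hv
  have hmem : a⁻¹ * (n : G) * a ∈ N := by simpa using hN.conj_mem n.1 n.2 a⁻¹
  have h2 : conjHom N a ⟨a⁻¹ * (n : G) * a, hmem⟩ = n := by
    ext
    show a * (a⁻¹ * (n : G) * a) * a⁻¹ = n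
    group
  have := hW ⟨a⁻¹ * (n : G) * a, hmem⟩ v hv
  simpa [MonoidHom.comp_apply, h2] using this

lemma exists_minimal_invariant {W : Type*} [AddCommGroup W] [Module ℂ W] [FiniteDimensional ℂ W]
    (ρ : Representation ℂ G W) (hW : Nontrivial W) :
    ∃ M : Submodule ℂ W, RepInvariant ρ M ∧ M ≠ ⊥ ∧
      ∀ M' : Submodule ℂ W, RepInvariant ρ M' → M' ≤ M → M' ≠ ⊥ → M' = M := by
  let S : Set ℕ := {n | ∃ M : Submodule ℂ W, RepInvariant ρ M ∧ M ≠ ⊥ ∧ Module.finrank ℂ M = n}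
  have hS : S.Nonempty := ⟨Module.finrank ℂ (⊤ : Submodule ℂ W), ⊤,
    fun g v _ => Submodule.mem_top, bot_ne_top.symm, rfl⟩
  obtain ⟨M, hMinv, hM0, hMrk⟩ := Nat.sInf_mem hS
  refine ⟨M, hMinv, hM0, fun M' hinv hle hne => ?_⟩
  have h1 : sInf S ≤ Module.finrank ℂ M' := Nat.sInf_le ⟨M', hinv, hne, rfl⟩
  have h2 : Module.finrank ℂ M' ≤ Module.finrank ℂ M := Submodule.finrank_mono hle
  exact Submodule.eq_of_le_of_finrank_eq hle (le_antisymm h2 (hMrk ▸ h1))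

lemma scalar_on_minimal {W : Type*} [AddCommGroup W] [Module ℂ W] [FiniteDimensional ℂ W]
    (ρ : Representation ℂ G W)
    (hcomm : ∀ g h : G, ρ g ∘ₗ ρ h = ρ h ∘ₗ ρ g)
    (M : Submodule ℂ W) (hMinv : RepInvariant ρ M) (hM0 : M ≠ ⊥)
    (hMmin : ∀ M' : Submodule ℂ W, RepInvariant ρ M' → M' ≤ M → M' ≠ ⊥ → M' = M) (g : G) :
    ∃ c : ℂ, ∀ w ∈ M, ρ g w = c • w := by
  haveI : Nontrivial M := Submodule.nontrivial_iff_ne_bot.mpr hM0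
  obtain ⟨c, hc⟩ := Module.End.exists_eigenvalue ((ρ g).restrict (hMinv g))
  obtain ⟨v, hv⟩ := hc.exists_hasEigenvector
  have hker : ∀ w : W, w ∈ LinearMap.ker (ρ g - c • LinearMap.id) ↔ ρ g w = c • w := by
    intro w
    rw [LinearMap.mem_ker]
    simp [sub_eq_zero]
  set E : Submodule ℂ W := M ⊓ LinearMap.ker (ρ g - c • LinearMap.id) with hE
  have hmemE : ∀ w : W, w ∈ E ↔ w ∈ M ∧ ρ g w = c • w := by
    intro w
    rw [hE, Submodule.mem_inf, hker]
  have hEM : E ≤ M := inf_le_left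
  have hEinv : RepInvariant ρ E := by
    intro h w hw
    rw [hmemE] at hw ⊢
    obtain ⟨hwM, hk⟩ := hw
    refine ⟨hMinv h w hwM, ?_⟩
    have hcw : ρ g (ρ h w) = ρ h (ρ g w) := by
      have := congrArg (fun f => f w) (hcomm g h)
      simpa using this
    rw [hcw, hk, map_smul]
  have hEne : E ≠ ⊥ := by
    intro hbot
    have hvE : (v : W) ∈ E := by
      rw [hmemE]
      refine ⟨v.2, ?_⟩
      have h1 := hv.1
      rw [Module.End.mem_eigenspace_iff] at h1
      have h2 := congrArg (Subtype.val) h1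
      simpa [LinearMap.restrict_apply] using h2
    rw [hbot, Submodule.mem_bot] at hvE
    exact hv.2 (Subtype.ext hvE)
  have hEeq := hMmin E hEinv hEM hEne
  refine ⟨c, fun w hw => ?_⟩
  have hwE : w ∈ E := hEeq ▸ hw
  exact ((hmemE w).mp hwE).2


section HomRep

variable {N : Subgroup G} [hN : N.Normal]
variable {A B : Type*} [AddCommGroup A] [Module ℂ A] [AddCommGroup B] [Module ℂ B]
variable (ρ : Representation ℂ G A) (π : Representation ℂ G B)

/-- The submodule of `N`-equivariant linear maps. -/
def HomN : Submodule ℂ (A →ₗ[ℂ] B) :=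
  RepHomSubmodule (ρ.comp N.subtype) (π.comp N.subtype)

lemma memHomN_iff {f : A →ₗ[ℂ] B} :
    f ∈ HomN (N := N) ρ π ↔ ∀ (n : N) (v : A), f (ρ ↑n v) = π ↑n (f v) :=
  Iff.rfl

lemma homRep_mem (g : G) (f : A →ₗ[ℂ] B) (hf : f ∈ HomN (N := N) ρ π) :
    π g ∘ₗ f ∘ₗ ρ g⁻¹ ∈ HomN (N := N) ρ π := by
  rw [memHomN_iff] at hf ⊢
  intro n v
  show π g (f (ρ g⁻¹ (ρ ↑n v))) = π ↑n (π g (f (ρ g⁻¹ v)))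
  have hm : g⁻¹ * (n : G) * g ∈ N := by simpa using hN.conj_mem n.1 n.2 g⁻¹
  have e1 : ρ g⁻¹ (ρ ↑n v) = ρ ↑(⟨g⁻¹ * (n : G) * g, hm⟩ : N) (ρ g⁻¹ v) := by
    have e : g⁻¹ * (n : G) = (↑(⟨g⁻¹ * (n : G) * g, hm⟩ : N) : G) * g⁻¹ := by
      show g⁻¹ * (n : G) = g⁻¹ * ↑n * g * g⁻¹
      group
    rw [← Module.End.mul_apply, ← map_mul, ← Module.End.mul_apply, ← map_mul]
    exact congrArg (fun z => ρ z v) e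
  rw [e1, hf ⟨_, hm⟩ (ρ g⁻¹ v), ← Module.End.mul_apply, ← map_mul,
    ← Module.End.mul_apply, ← map_mul]
  congr 2
  show g * (g⁻¹ * ↑n * g) = ↑n * g
  group

/-- The `G`-representation on `N`-equivariant maps, `g · f = π g ∘ f ∘ ρ g⁻¹`. -/
def homRep : Representation ℂ G (HomN (N := N) ρ π) where
  toFun g :=
    { toFun := fun f => ⟨π g ∘ₗ f.1 ∘ₗ ρ g⁻¹, homRep_mem ρ π g f.1 f.2⟩
      map_add' := fun a b => Subtype.ext (by
        simp [LinearMap.comp_add, LinearMap.add_comp])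
      map_smul' := fun c a => Subtype.ext (by
        simp [LinearMap.comp_smul, LinearMap.smul_comp]) }
  map_one' := by
    refine LinearMap.ext fun f => Subtype.ext ?_
    show π 1 ∘ₗ f.1 ∘ₗ ρ 1⁻¹ = f.1
    simp only [inv_one, map_one, Module.End.one_eq_id, LinearMap.id_comp, LinearMap.comp_id]
  map_mul' g h := by
    refine LinearMap.ext fun f => Subtype.ext ?_
    show π (g * h) ∘ₗ f.1 ∘ₗ ρ (g * h)⁻¹ = π g ∘ₗ (π h ∘ₗ f.1 ∘ₗ ρ h⁻¹) ∘ₗ ρ g⁻¹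
    rw [mul_inv_rev, map_mul, map_mul]
    rfl

lemma homRep_apply (g : G) (f : HomN (N := N) ρ π) :
    (homRep ρ π g f).1 = π g ∘ₗ f.1 ∘ₗ ρ g⁻¹ := rfl

lemma homRep_fix (n : N) (f : HomN (N := N) ρ π) : homRep (N := N) ρ π ↑n f = f := by
  refine Subtype.ext ?_
  rw [homRep_apply]
  ext v
  show π ↑n (f.1 (ρ (↑n)⁻¹ v)) = f.1 v
  rw [← (memHomN_iff ρ π).mp f.2 n (ρ (↑n)⁻¹ v), ← Module.End.mul_apply, ← map_mul]
  simp

lemma homRep_comm (hab : ∀ x y : G, x * y * x⁻¹ * y⁻¹ ∈ N) (g h : G) :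
    homRep (N := N) ρ π g ∘ₗ homRep ρ π h = homRep ρ π h ∘ₗ homRep ρ π g := by
  have key : homRep (N := N) ρ π (g * h) = homRep ρ π (h * g) := by
    have hn : (h * g)⁻¹ * (g * h) ∈ N := by
      have h1 := hab g⁻¹ h⁻¹
      have e : (h * g)⁻¹ * (g * h) = g⁻¹ * h⁻¹ * g⁻¹⁻¹ * h⁻¹⁻¹ := by group
      rw [e]; exact h1
    set n : N := ⟨(h * g)⁻¹ * (g * h), hn⟩ with hndef
    have e1 : g * h = (h * g) * ↑n := by
      show g * h = h * g * ((h * g)⁻¹ * (g * h))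
      group
    refine LinearMap.ext fun f => ?_
    have h2 : homRep (N := N) ρ π (g * h) f = homRep ρ π (h * g) (homRep ρ π ↑n f) := by
      rw [e1, map_mul]; rfl
    rw [h2, homRep_fix]
  rw [← Module.End.mul_eq_comp, ← Module.End.mul_eq_comp, ← map_mul, ← map_mul, key]

end HomRep

end Stmt8Aux


namespace Stmt8Aux

lemma twisted_schur {A B : Type*} [AddCommGroup A] [Module ℂ A] [AddCommGroup B] [Module ℂ B]
    {ρ : Representation ℂ G A} {π : Representation ℂ G B}
    (hρ : RepIrreducible ρ) (hπ : RepIrreducible π)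
    (c : G → ℂ) (hc : ∀ g, c g ≠ 0) (f : A →ₗ[ℂ] B)
    (hf : ∀ g v, f (ρ g v) = c g • π g (f v)) (hf0 : f ≠ 0) :
    Function.Bijective f := by
  constructor
  · rw [← LinearMap.ker_eq_bot]
    have hinv : RepInvariant ρ (LinearMap.ker f) := by
      intro g v hv
      rw [LinearMap.mem_ker] at hv ⊢
      rw [hf, hv, map_zero, smul_zero]
    rcases hρ.2 (LinearMap.ker f) hinv with h | h
    · exact h
    · exact absurd (LinearMap.ker_eq_top.mp h) hf0
  · rw [← LinearMap.range_eq_top]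
    have hinv : RepInvariant π (LinearMap.range f) := by
      intro g w hw
      obtain ⟨v, rfl⟩ := LinearMap.mem_range.mp hw
      have h1 : π g (f v) = (c g)⁻¹ • f (ρ g v) := by
        rw [hf g v, smul_smul, inv_mul_cancel₀ (hc g), one_smul]
      rw [h1]
      exact Submodule.smul_mem _ _ (LinearMap.mem_range_self f _)
    rcases hπ.2 (LinearMap.range f) hinv with h | h
    · exact absurd (LinearMap.range_eq_bot.mp h) hf0
    · exact h

/-- Evaluation at `a` of functions in the induced representation space. -/
def evMap (N : Subgroup G) {V : Type*} [AddCommGroup V] [Module ℂ V]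
    (σ : Representation ℂ N V) (U : Submodule ℂ (IndCarrier N σ)) (a : G) :
    ↥U →ₗ[ℂ] V where
  toFun u := u.1.1 a
  map_add' u w := rfl
  map_smul' c u := rfl

lemma evMap_intertwine {N : Subgroup G} [hN : N.Normal] {V : Type*} [AddCommGroup V]
    [Module ℂ V] (σ : Representation ℂ N V) (U : Submodule ℂ (IndCarrier N σ))
    (hU : RepInvariant (Ind N σ) U) (a : G) (n : N) (u : U) :
    evMap N σ U a (SubRep (Ind N σ) U hU ↑n u) = σ (conjHom N a n) (evMap N σ U a u) := by
  show u.1.1 (a * ↑n) = σ (conjHom N a n) (u.1.1 a)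
  have h := u.1.2 (conjHom N a n) a
  have e : a * (n : G) = (a * ↑n * a⁻¹) * a := by group
  rw [e]
  exact h

lemma intertwine_shift {N : Subgroup G} [hN : N.Normal]
    {A V : Type*} [AddCommGroup A] [Module ℂ A] [AddCommGroup V] [Module ℂ V]
    (τ : Representation ℂ G A) (σ : Representation ℂ N V) (a x : G) (p : A →ₗ[ℂ] V)
    (hp : ∀ (n : N) (u : A), p (τ ↑n u) = σ (conjHom N a n) (p u)) (n : N) (u : A) :
    p (τ x (τ ↑n u)) = σ (conjHom N (a * x) n) (p (τ x u)) := by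
  have e : x * (n : G) = ↑(conjHom N x n) * x := by
    show x * (n : G) = (x * ↑n * x⁻¹) * x
    group
  have h1 : τ x (τ ↑n u) = τ ↑(conjHom N x n) (τ x u) := by
    rw [← Module.End.mul_apply, ← map_mul, ← Module.End.mul_apply, ← map_mul]
    exact congrArg (fun z => τ z u) e
  have e2 : conjHom N a (conjHom N x n) = conjHom N (a * x) n := by
    ext
    show a * (x * ↑n * x⁻¹) * a⁻¹ = a * x * ↑n * (a * x)⁻¹
    group
  rw [h1, hp (conjHom N x n) (τ x u), e2]

lemma exists_equivariant_section {H : Type*} [Group H] [Finite H]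
    {V B : Type*} [AddCommGroup V] [Module ℂ V] [AddCommGroup B] [Module ℂ B]
    (ρ : Representation ℂ H V) (π : Representation ℂ H B)
    (p : B →ₗ[ℂ] V) (hp : ∀ (h : H) (b : B), p (π h b) = ρ h (p b))
    (hsurj : LinearMap.range p = ⊤) :
    ∃ j : V →ₗ[ℂ] B, (∀ v, p (j v) = v) ∧ ∀ (h : H) (v : V), j (ρ h v) = π h (j v) := by
  haveI := Fintype.ofFinite H
  obtain ⟨s, hs⟩ := p.exists_rightInverse_of_surjective hsurj
  have hsv : ∀ v, p (s v) = v := fun v => congrArg (fun f => f v) hs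
  set cH : ℂ := (Fintype.card H : ℂ) with hcH
  have hc : cH ≠ 0 := Nat.cast_ne_zero.mpr Fintype.card_ne_zero
  set j : V →ₗ[ℂ] B := cH⁻¹ • ∑ h : H, π h ∘ₗ s ∘ₗ ρ h⁻¹ with hj
  have hjapp : ∀ v, j v = cH⁻¹ • ∑ h : H, π h (s (ρ h⁻¹ v)) := by
    intro v
    rw [hj]
    simp [LinearMap.sum_apply]
  refine ⟨j, ?_, ?_⟩
  · intro v
    rw [hjapp, map_smul, map_sum]
    have hterm : ∀ h : H, p (π h (s (ρ h⁻¹ v))) = v := by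
      intro h
      rw [hp, hsv, ← Module.End.mul_apply, ← map_mul, mul_inv_cancel, map_one,
        Module.End.one_apply]
    rw [Finset.sum_congr rfl (fun h _ => hterm h), Finset.sum_const, Finset.card_univ,
      ← Nat.cast_smul_eq_nsmul ℂ, smul_smul, ← hcH, inv_mul_cancel₀ hc, one_smul]
  · intro m v
    have e0 : ∀ h : H, ρ h⁻¹ (ρ m v) = ρ (h⁻¹ * m) v := fun h => by
      rw [← Module.End.mul_apply, ← map_mul]
    rw [hjapp, hjapp, map_smul]
    congr 1
    rw [map_sum]
    simp only [e0]
    refine (Fintype.sum_equiv (Equiv.mulLeft m)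
      (fun h => π m (π h (s (ρ h⁻¹ v))))
      (fun h => π h (s (ρ (h⁻¹ * m) v))) ?_).symm
    intro h
    simp only [Equiv.coe_mulLeft]
    rw [← Module.End.mul_apply, ← map_mul]
    have e1 : (m * h)⁻¹ * m = h⁻¹ := by group
    rw [e1]

end Stmt8Aux


namespace Stmt8Aux

/-- From a nonzero `N`-equivariant map between irreducible `G`-representations (with `G/N`
abelian), produce a twisting character and a twisted isomorphism. -/
lemma exists_twisting_character [Finite G] {N : Subgroup G} [hN : N.Normal]
    (hab : ∀ x y : G, x * y * x⁻¹ * y⁻¹ ∈ N)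
    {A B : Type*} [AddCommGroup A] [Module ℂ A] [FiniteDimensional ℂ A]
    [AddCommGroup B] [Module ℂ B] [FiniteDimensional ℂ B]
    (τ : Representation ℂ G A) (π : Representation ℂ G B)
    (hτ : RepIrreducible τ) (hπ : RepIrreducible π)
    (F : A →ₗ[ℂ] B) (hFmem : F ∈ HomN (N := N) τ π) (hFne : F ≠ 0) :
    ∃ χ : G →* ℂˣ, (∀ n ∈ N, χ n = 1) ∧
      ∃ e : A ≃ₗ[ℂ] B, ∀ (g : G) (v : A), e (τ g v) = (χ g : ℂ) • π g (e v) := by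
  classical
  haveI hHnt : Nontrivial (HomN (N := N) τ π) := by
    refine nontrivial_of_ne ⟨F, hFmem⟩ 0 ?_
    intro h
    exact hFne (congrArg Subtype.val h)
  obtain ⟨M, hMinv, hM0, hMmin⟩ := exists_minimal_invariant (homRep (N := N) τ π) hHnt
  have hcomm := homRep_comm (N := N) τ π hab
  choose c hc using fun g =>
    scalar_on_minimal (homRep (N := N) τ π) hcomm M hMinv hM0 hMmin g
  obtain ⟨f₀, hf₀M, hf₀ne⟩ := Submodule.exists_mem_ne_zero_of_ne_bot hM0
  have hact : ∀ g : G, homRep (N := N) τ π g f₀ = c g • f₀ := fun g => hc g f₀ hf₀M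
  have hne : ∀ g : G, c g ≠ 0 := by
    intro g h0
    have h1 := hact g
    rw [h0, zero_smul] at h1
    have h2 := congrArg (homRep (N := N) τ π g⁻¹) h1
    rw [← Module.End.mul_apply, ← map_mul, inv_mul_cancel, map_one, Module.End.one_apply,
      map_zero] at h2
    exact hf₀ne h2
  have hmul : ∀ g h : G, c (g * h) = c g * c h := by
    intro g h
    have h1 : homRep (N := N) τ π (g * h) f₀ = (c h * c g) • f₀ := by
      rw [map_mul, Module.End.mul_apply, hact h, map_smul, hact g, smul_smul]
    rw [hact (g * h)] at h1
    rw [smul_left_injective ℂ hf₀ne h1, mul_comm]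
  have hone : c 1 = 1 := by
    have h1 := hact 1
    rw [map_one, Module.End.one_apply] at h1
    have h2 : c 1 • f₀ = (1 : ℂ) • f₀ := by rw [one_smul, ← h1]
    exact smul_left_injective ℂ hf₀ne h2
  have hNtriv : ∀ n : N, c ↑n = 1 := by
    intro n
    have h1 := hact ↑n
    rw [homRep_fix] at h1
    have h2 : c ↑n • f₀ = (1 : ℂ) • f₀ := by rw [one_smul, ← h1]
    exact smul_left_injective ℂ hf₀ne h2
  refine ⟨{ toFun := fun g => (Units.mk0 (c g) (hne g))⁻¹
            map_one' := by
              ext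
              simp only [Units.val_inv_eq_inv_val, Units.val_mk0, hone, inv_one, Units.val_one]
            map_mul' := fun g h => by
              ext
              simp only [Units.val_inv_eq_inv_val, Units.val_mk0, hmul, mul_inv,
                Units.val_mul] }, ?_, ?_⟩
  · intro n hn
    ext
    have hcn : c n = 1 := hNtriv ⟨n, hn⟩
    show (((Units.mk0 (c n) (hne n))⁻¹ : ℂˣ) : ℂ) = ((1 : ℂˣ) : ℂ)
    simp only [Units.val_inv_eq_inv_val, Units.val_mk0, hcn, inv_one, Units.val_one]
  · have hf : ∀ (g : G) (v : A), f₀.1 (τ g v) = (c g)⁻¹ • π g (f₀.1 v) := by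
      intro g v
      have h1 := congrArg Subtype.val (hact g)
      rw [homRep_apply] at h1
      have h2 := congrArg (fun f => f (τ g v)) h1
      simp only [LinearMap.comp_apply] at h2
      have h3 : τ g⁻¹ (τ g v) = v := by
        rw [← Module.End.mul_apply, ← map_mul, inv_mul_cancel, map_one, Module.End.one_apply]
      rw [h3] at h2
      have h4 : (↑(c g • f₀) : A →ₗ[ℂ] B) = c g • f₀.1 := rfl
      rw [h4, LinearMap.smul_apply] at h2
      rw [h2, smul_smul, inv_mul_cancel₀ (hne g), one_smul]
    have hbij : Function.Bijective f₀.1 := by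
      refine twisted_schur hτ hπ (fun g => (c g)⁻¹) (fun g => inv_ne_zero (hne g)) f₀.1
        (fun g v => hf g v) ?_
      intro h
      exact hf₀ne (Subtype.ext h)
    refine ⟨LinearEquiv.ofBijective f₀.1 hbij, ?_⟩
    intro g v
    show f₀.1 (τ g v) = _ • π g (f₀.1 v)
    rw [hf g v]
    show (c g)⁻¹ • (π g) (f₀.1 v) = (((Units.mk0 (c g) (hne g))⁻¹ : ℂˣ) : ℂ) • (π g) (f₀.1 v)
    rw [Units.val_inv_eq_inv_val, Units.val_mk0]

end Stmt8Aux


/-- let `N ◁ G` with `G/N` abelian and `σ` an irreducible representation of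
`N`.  Any two irreducible subrepresentations `τ, τ'` of `Ind_N^G σ` differ by a twist by a
character of `G` trivial on `N`:  `τ' ≅ τ ⊗ χ`. -/
theorem stmt8 [Finite G] (N : Subgroup G) [N.Normal]
    (hab : ∀ x y : G, x * y * x⁻¹ * y⁻¹ ∈ N)
    {V : Type*} [AddCommGroup V] [Module ℂ V] [FiniteDimensional ℂ V]
    (σ : Representation ℂ N V) (hσ : RepIrreducible σ)
    (U U' : Submodule ℂ (IndCarrier N σ))
    (hU : RepInvariant (Ind N σ) U) (hU' : RepInvariant (Ind N σ) U')
    (hτ : RepIrreducible (V := U) (SubRep (Ind N σ) U hU))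
    (hτ' : RepIrreducible (V := U') (SubRep (Ind N σ) U' hU')) :
    ∃ χ : G →* ℂˣ, (∀ n ∈ N, χ n = 1) ∧
      ∃ e : U ≃ₗ[ℂ] U', ∀ (g : G) (v : U),
        e (SubRep (Ind N σ) U hU g v) = (χ g : ℂ) • SubRep (Ind N σ) U' hU' g (e v) := by
  classical
  open Stmt8Aux in
  haveI := Fintype.ofFinite G
  set τ : Representation ℂ G U := SubRep (Ind N σ) U hU with hτdef
  set τ' : Representation ℂ G U' := SubRep (Ind N σ) U' hU' with hτ'def
  haveI hUnt : Nontrivial U := hτ.1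
  haveI hU'nt : Nontrivial U' := hτ'.1
  -- nonzero vectors and evaluation points
  obtain ⟨u₀, hu₀⟩ := exists_ne (0 : U)
  obtain ⟨u₀', hu₀'⟩ := exists_ne (0 : U')
  have hu₀f : (u₀.1.1 : G → V) ≠ 0 := fun h => hu₀ (Subtype.ext (Subtype.ext h))
  have hu₀'f : (u₀'.1.1 : G → V) ≠ 0 := fun h => hu₀' (Subtype.ext (Subtype.ext h))
  obtain ⟨a, ha⟩ := Function.ne_iff.mp hu₀f
  obtain ⟨a', ha'⟩ := Function.ne_iff.mp hu₀'f
  -- the intertwining evaluation maps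
  set p : ↥U →ₗ[ℂ] V := evMap N σ U a with hpdef
  set p' : ↥U' →ₗ[ℂ] V := evMap N σ U' a' with hp'def
  have hpint : ∀ (n : N) (u : U), p (τ ↑n u) = σ (conjHom N a n) (p u) :=
    fun n u => evMap_intertwine σ U hU a n u
  have hp'int : ∀ (n : N) (u : U'), p' (τ' ↑n u) = σ (conjHom N a' n) (p' u) :=
    fun n u => evMap_intertwine σ U' hU' a' n u
  have hp0 : p u₀ ≠ 0 := ha
  have hp'0 : p' u₀' ≠ 0 := ha'
  -- shift p to intertwine with the a'-conjugate
  set x : G := a⁻¹ * a' with hxdef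
  set q : ↥U →ₗ[ℂ] V := p ∘ₗ τ x with hqdef
  have hax : a * x = a' := by rw [hxdef]; group
  have hqint : ∀ (n : N) (u : U), q (τ ↑n u) = σ (conjHom N a' n) (q u) := by
    intro n u
    have h1 := intertwine_shift τ σ a x p hpint n u
    rw [hax] at h1
    exact h1
  set u₁ : ↥U := τ x⁻¹ u₀ with hu₁def
  have hq0 : q u₁ ≠ 0 := by
    have h1 : q u₁ = p u₀ := by
      show p (τ x (τ x⁻¹ u₀)) = p u₀
      rw [← Module.End.mul_apply, ← map_mul, mul_inv_cancel, map_one, Module.End.one_apply]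
    rw [h1]
    exact hp0
  -- the conjugate representation and its irreducibility
  set ρc : Representation ℂ N V := σ.comp (conjHom N a') with hρcdef
  have hρcirr : RepIrreducible ρc := conjRep_irreducible hσ a'
  -- p' is surjective
  have hrange : LinearMap.range p' = ⊤ := by
    have hinv : RepInvariant ρc (LinearMap.range p') := by
      intro n w hw
      obtain ⟨u, rfl⟩ := LinearMap.mem_range.mp hw
      have h1 : ρc n (p' u) = p' (τ' ↑n u) := (hp'int n u).symm
      rw [h1]
      exact LinearMap.mem_range_self p' _
    rcases hρcirr.2 (LinearMap.range p') hinv with h | h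
    · exact absurd (LinearMap.range_eq_bot.mp h ▸ rfl : p' u₀' = 0) hp'0
    · exact h
  -- equivariant section
  obtain ⟨j, hpj, hjeq⟩ := exists_equivariant_section ρc (τ'.comp N.subtype) p'
    (fun n b => hp'int n b) hrange
  -- the nonzero N-equivariant map U → U'
  have hF : (j ∘ₗ q) ∈ HomN (N := N) (A := ↥U) (B := ↥U') τ τ' := by
    rw [memHomN_iff]
    intro n u
    show j (q (τ ↑n u)) = τ' ↑n (j (q u))
    rw [hqint n u]
    exact hjeq n (q u)
  have hFne : (j ∘ₗ q) ≠ 0 := by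
    intro h0
    have h1 : j (q u₁) = 0 := by rw [← LinearMap.comp_apply, h0, LinearMap.zero_apply]
    have h2 : p' (j (q u₁)) = q u₁ := hpj (q u₁)
    rw [h1, map_zero] at h2
    exact hq0 h2.symm
  haveI hfd1 : FiniteDimensional ℂ ↥U := inferInstance
  haveI hfd2 : FiniteDimensional ℂ ↥U' := inferInstance
  exact @exists_twisting_character G _ _ N _ hab ↥U ↥U'
    inferInstance inferInstance inferInstance inferInstance inferInstance inferInstance
    τ τ' hτ hτ' (j ∘ₗ q) hF hFne
end
end
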